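/- arXiv:1402.6659 — 6 statements merged into one kernel-verified Lean document; each statement's English description precedes it below -/
import Mathlib

section
/- A set is κ-small (has cardinality < κ) if and only if it is a κ-presentable object in the category of sets. -/
universe v u u₂

open CategoryTheory Limits Opposite

noncomputable section

/-- A small category with fewer than `κ` morphisms. -/
def CardSmallCat (K : Type v) [SmallCategory K] (κ : Cardinal.{v}) : Prop :=
  Cardinal.mk (Σ p : K × K, p.1 ⟶ p.2) < κ

/-- `J` is `κ`-filtered: every `κ`-small diagram in `J` admits a cocone. -/
def IsCardFiltered (J : Type v) [SmallCategory J] (κ : Cardinal.{v}) : Prop :=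
  ∀ (K : Type v) [SmallCategory K], CardSmallCat K κ → ∀ F : K ⥤ J, Nonempty (Cocone F)

/-- `A` is `κ`-presentable: `Hom(A,-)` preserves colimits of small `κ`-filtered diagrams. -/
def IsCardPresentable {C : Type u} [Category.{v} C] (κ : Cardinal.{v}) (A : C) : Prop :=
  ∀ (J : Type v) [SmallCategory J], IsCardFiltered J κ →
    Nonempty (PreservesColimitsOfShape J (coyoneda.obj (op A)))

/-- `A` is `(κ, lam)`-presentable: `Hom(A,-)` preserves colimits of `lam`-small
`κ`-filtered diagrams. -/
def IsRelPresentable {C : Type u} [Category.{v} C] (κ lam : Cardinal.{v}) (A : C) : Prop :=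
  ∀ (J : Type v) [SmallCategory J], CardSmallCat J lam → IsCardFiltered J κ →
    Nonempty (PreservesColimitsOfShape J (coyoneda.obj (op A)))

/-- `C` is a `κ`-accessible category. -/
def IsCardAccessible (C : Type u) [Category.{v} C] (κ : Cardinal.{v}) : Prop :=
  (∀ (J : Type v) [SmallCategory J], IsCardFiltered J κ → HasColimitsOfShape J C) ∧
  ∃ G : Set C, Small.{v} G ∧ (∀ A ∈ G, IsCardPresentable κ A) ∧
    ∀ X : C, ∃ (J : Type v) (inst : SmallCategory J) (F : J ⥤ C) (c : Cocone F),
      IsCardFiltered J κ ∧ (∀ j, F.obj j ∈ G) ∧ Nonempty (IsColimit c) ∧ Nonempty (c.pt ≅ X)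

/-- `F` preserves colimits of small `κ`-filtered diagrams. -/
def PreservesCardFiltered {C : Type u} [Category.{v} C] {D : Type u₂} [Category.{v} D]
    (F : C ⥤ D) (κ : Cardinal.{v}) : Prop :=
  ∀ (J : Type v) [SmallCategory J], IsCardFiltered J κ →
    Nonempty (PreservesColimitsOfShape J F)

/-- `F` is a strongly `κ`-accessible functor. -/
def StronglyCardAccessible {C : Type u} [Category.{v} C] {D : Type u₂} [Category.{v} D]
    (F : C ⥤ D) (κ : Cardinal.{v}) : Prop :=
  IsCardAccessible C κ ∧ IsCardAccessible D κ ∧ PreservesCardFiltered F κ ∧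
    ∀ X : C, IsCardPresentable κ X → IsCardPresentable κ (F.obj X)

/-- `κ ◁ lam`: `κ` is sharply less than `lam`. -/
def SharplyLess (κ lam : Cardinal.{u}) : Prop :=
  κ < lam ∧ ∀ X : Type u, Cardinal.mk X < lam →
    ∃ S : Set {s : Set X // Cardinal.mk s < κ},
      Cardinal.mk S < lam ∧ ∀ t : {s : Set X // Cardinal.mk s < κ}, ∃ w ∈ S, t.1 ⊆ w.1

section Aux

open Cardinal

/-- If all hom-types are subsingletons and there are `< κ` objects, the category is κ-small. -/
lemma cardSmallCat_of_subsingleton {κ : Cardinal.{v}} (hκ : ℵ₀ ≤ κ)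
    (K : Type v) [SmallCategory K] (hsub : ∀ a b : K, Subsingleton (a ⟶ b))
    (hK : Cardinal.mk K < κ) : CardSmallCat K κ := by
  have h1 : Cardinal.mk (Σ p : K × K, p.1 ⟶ p.2) ≤ Cardinal.mk (K × K) := by
    rw [Cardinal.mk_sigma]
    calc (Cardinal.sum fun p : K × K => #(p.1 ⟶ p.2))
        ≤ Cardinal.sum fun _ : K × K => (1 : Cardinal) := by
          apply Cardinal.sum_le_sum
          intro p
          have := hsub p.1 p.2
          exact Cardinal.le_one_iff_subsingleton.mpr this
      _ = #(K × K) * 1 := Cardinal.sum_const' _ _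
      _ = #(K × K) := mul_one _
  refine lt_of_le_of_lt h1 ?_
  have h2 : #(K × K) = #K * #K := by simp
  rw [h2]
  exact Cardinal.mul_lt_of_lt hκ hK hK

lemma cardSmallCat_of_finCategory {κ : Cardinal.{v}} (hκ : ℵ₀ ≤ κ)
    (K : Type v) [SmallCategory K] [FinCategory K] : CardSmallCat K κ := by
  have : Finite (Σ p : K × K, p.1 ⟶ p.2) := by infer_instance
  exact lt_of_lt_of_le (Cardinal.mk_lt_aleph0_iff.mpr this) hκ

lemma isFiltered_of_isCardFiltered {κ : Cardinal.{v}} (hκ : κ.IsRegular)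
    {J : Type v} [SmallCategory J] (hJ : IsCardFiltered J κ) : IsFiltered J := by
  apply IsFiltered.of_cocone_nonempty.{v}
  intro K _ _ F
  exact hJ K (cardSmallCat_of_finCategory hκ.aleph0_le K) F

instance widePushoutShape_hom_subsingleton {α : Type v} (a b : WidePushoutShape α) :
    Subsingleton (a ⟶ b) := by
  constructor
  intro f g
  exact Subsingleton.elim f g

lemma isCardPresentable_of_small {κ : Cardinal.{v}} (hκ : κ.IsRegular) {S : Type v}
    (hS : Cardinal.mk S < κ) : IsCardPresentable κ S := by
  intro J _ hJ
  have hfil : IsFiltered J := isFiltered_of_isCardFiltered hκ hJ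
  constructor
  constructor
  intro F
  apply preservesColimit_of_preserves_colimit_cocone (colimit.isColimit F)
  apply Types.FilteredColimit.isColimitOf
  · -- joint surjectivity
    intro (x : S ⟶ colimit F)
    -- `x : S ⟶ colimit F`, i.e. `S → colimit F`
    choose j y hy using fun s : S => Types.jointly_surjective' ((x : S ⟶ colimit F) s)
    -- upper bound of the family `j`
    have hdsub : ∀ a b : Discrete S, Subsingleton (a ⟶ b) := by
      intro a b
      constructor
      rintro ⟨⟨h1⟩⟩ ⟨⟨h2⟩⟩
      rfl
    have hdcard : Cardinal.mk (Discrete S) < κ := by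
      rw [Cardinal.mk_congr (CategoryTheory.discreteEquiv (α := S))]
      exact hS
    obtain ⟨c⟩ := hJ (Discrete S) (cardSmallCat_of_subsingleton hκ.aleph0_le _ hdsub hdcard)
      (Discrete.functor j)
    refine ⟨c.pt, TypeCat.ofHom (fun s => F.map (c.ι.app ⟨s⟩) (y s)), ?_⟩
    refine ConcreteCategory.hom_ext (C := Type v) (X := S) (Y := colimit F) _ _ (fun s => ?_)
    show (x : S ⟶ colimit F) s = colimit.ι F c.pt (F.map (c.ι.app ⟨s⟩) (y s))
    rw [← hy s]
    exact (ConcreteCategory.congr_hom (colimit.w F (c.ι.app ⟨s⟩)) (y s)).symm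
  · -- joint injectivity
    intro i j (xi : S ⟶ F.obj i) (xj : S ⟶ F.obj j) h
    have h' : ∀ s : S, colimit.ι F i ((xi : S ⟶ F.obj i) s) = colimit.ι F j ((xj : S ⟶ F.obj j) s) := fun s => congrArg (fun φ : S ⟶ colimit F => φ s) h
    set m := IsFiltered.max i j with hm
    set u := IsFiltered.leftToMax i j
    set v := IsFiltered.rightToMax i j
    set a : S → F.obj m := fun s => F.map u ((xi : S ⟶ F.obj i) s) with ha
    set b : S → F.obj m := fun s => F.map v ((xj : S ⟶ F.obj j) s) with hb
    have h'' : ∀ s, colimit.ι F m (a s) = colimit.ι F m (b s) := by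
      intro s
      show colimit.ι F m (F.map u ((xi : S ⟶ F.obj i) s)) = colimit.ι F m (F.map v ((xj : S ⟶ F.obj j) s))
      rw [Types.Colimit.w_apply, Types.Colimit.w_apply]
      exact h' s
    have hrel : ∀ s, ∃ (k : J) (f : m ⟶ k) (g : m ⟶ k), F.map f (a s) = F.map g (b s) := by
      intro s
      exact (Types.FilteredColimit.colimit_eq_iff F).mp (h'' s)
    choose k f g hfg using hrel
    -- coequalize
    set w : ∀ s : S, m ⟶ IsFiltered.coeq (f s) (g s) :=
      fun s => f s ≫ IsFiltered.coeqHom (f s) (g s) with hw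
    have hweq : ∀ s, F.map (w s) (a s) = F.map (w s) (b s) := by
      intro s
      have h1 : F.map (w s) (a s) = F.map (IsFiltered.coeqHom (f s) (g s)) (F.map (f s) (a s)) :=
        FunctorToTypes.map_comp_apply F _ _ _
      have h2 : F.map (w s) (b s) = F.map (IsFiltered.coeqHom (f s) (g s)) (F.map (g s) (b s)) := by
        rw [hw]
        simp only []
        rw [IsFiltered.coeq_condition (f s) (g s)]
        exact FunctorToTypes.map_comp_apply F _ _ _
      rw [h1, h2, hfg s]
    -- wide pushout over S
    have hwcard : Cardinal.mk (WidePushoutShape S) < κ := by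
      show Cardinal.mk (Option S) < κ
      rw [Cardinal.mk_option]
      exact Cardinal.add_lt_of_lt hκ.aleph0_le hS (lt_of_lt_of_le Cardinal.one_lt_aleph0
        hκ.aleph0_le)
    obtain ⟨c⟩ := hJ (WidePushoutShape S)
      (cardSmallCat_of_subsingleton hκ.aleph0_le _ (fun a b => inferInstance) hwcard)
      (WidePushoutShape.wideSpan m (fun s => IsFiltered.coeq (f s) (g s)) w)
    refine ⟨c.pt, u ≫ c.ι.app none, v ≫ c.ι.app none, ?_⟩
    refine ConcreteCategory.hom_ext (C := Type v) (X := S) (Y := F.obj c.pt) _ _ (fun s => ?_)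
    show F.map (u ≫ c.ι.app none) ((xi : S ⟶ F.obj i) s) = F.map (v ≫ c.ι.app none) ((xj : S ⟶ F.obj j) s)
    have hnat : w s ≫ c.ι.app (some s) = c.ι.app none := Cocone.w c (WidePushoutShape.Hom.init s)
    erw [FunctorToTypes.map_comp_apply, FunctorToTypes.map_comp_apply]
    show F.map (c.ι.app none) (a s) = F.map (c.ι.app none) (b s)
    calc F.map (c.ι.app none) (a s)
        = F.map (w s ≫ c.ι.app (some s)) (a s) := by rw [hnat]; rfl
      _ = F.map (c.ι.app (some s)) (F.map (w s) (a s)) := FunctorToTypes.map_comp_apply F _ _ _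
      _ = F.map (c.ι.app (some s)) (F.map (w s) (b s)) := by rw [hweq s]
      _ = F.map (w s ≫ c.ι.app (some s)) (b s) := (FunctorToTypes.map_comp_apply F _ _ _).symm
      _ = F.map (c.ι.app none) (b s) := by rw [hnat]; rfl

lemma small_of_isCardPresentable {κ : Cardinal.{v}} (hκ : κ.IsRegular) {S : Type v}
    (h : IsCardPresentable κ S) : Cardinal.mk S < κ := by
  classical
  -- the poset of κ-small subsets of S
  let J : Type v := {A : Set S // Cardinal.mk A < κ}
  have hJfil : IsCardFiltered J κ := by
    intro K _ hK F
    have hKcard : Cardinal.mk K < κ := by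
      refine lt_of_le_of_lt (Cardinal.mk_le_of_injective (f :=
        fun k : K => (⟨(k, k), 𝟙 k⟩ : Σ p : K × K, p.1 ⟶ p.2)) ?_) hK
      intro k k' hkk
      exact congrArg (fun p => p.1.1) hkk
    have hT : Cardinal.mk (⋃ k : K, ((F.obj k).1 : Set S)) < κ :=
      (Cardinal.card_iUnion_lt_iff_forall_of_isRegular hκ hKcard).mpr fun k => (F.obj k).2
    refine ⟨⟨⟨⋃ k : K, ((F.obj k).1 : Set S), hT⟩, ⟨fun k => homOfLE ?_, ?_⟩⟩⟩
    · exact Set.subset_iUnion (fun k : K => ((F.obj k).1 : Set S)) k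
    · intro k k' f
      apply Subsingleton.elim
  -- the canonical diagram of κ-small subsets with colimit S
  let D : J ⥤ Type v :=
    { obj := fun A => A.1
      map := fun {A B} f => TypeCat.ofHom (fun (x : A.1) => (⟨x.1, leOfHom f x.2⟩ : B.1))
      map_id := fun A => rfl
      map_comp := fun f g => rfl }
  let c : Cocone D := { pt := S, ι := { app := fun A => TypeCat.ofHom (fun (x : A.1) => x.1), naturality := fun A B f => rfl } }
  have hone : (1 : Cardinal.{v}) < κ := lt_of_lt_of_le Cardinal.one_lt_aleph0 hκ.aleph0_le
  have hc : IsColimit c := by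
    apply Types.FilteredColimit.isColimitOf
    · intro x
      refine ⟨⟨{x}, ?_⟩, ⟨x, rfl⟩, rfl⟩
      rw [Cardinal.mk_singleton]
      exact hone
    · intro i j xi xj hx
      have hk : Cardinal.mk ((i.1 ∪ j.1 : Set S)) < κ := by
        refine lt_of_le_of_lt (Cardinal.mk_union_le _ _) ?_
        exact Cardinal.add_lt_of_lt hκ.aleph0_le i.2 j.2
      refine ⟨⟨i.1 ∪ j.1, hk⟩, homOfLE Set.subset_union_left,
        homOfLE Set.subset_union_right, ?_⟩
      exact Subtype.ext hx
  obtain ⟨P⟩ := h J hJfil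
  have hmc : IsColimit ((coyoneda.obj (op S)).mapCocone c) :=
    isColimitOfPreserves (coyoneda.obj (op S)) hc
  obtain ⟨A, (g : S ⟶ A.1), hg⟩ := Types.jointly_surjective _ hmc (𝟙 S)
  -- `g : S → A.1` with `Subtype.val ∘ g = id`
  have hg' : ∀ s : S, ((g : S ⟶ A.1) s).1 = s := fun s => congrArg (fun φ : S ⟶ S => φ s) hg
  have hinj : Function.Injective (g : S ⟶ A.1) := by
    intro s t hst
    rw [← hg' s, ← hg' t, hst]
  exact lt_of_le_of_lt (Cardinal.mk_le_of_injective hinj) A.2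

end Aux

/-- A set is `κ`-small iff it is a `κ`-presentable object of `Set`. -/
theorem stmt1 (κ : Cardinal.{v}) (hκ : κ.IsRegular) (S : Type v) :
    Cardinal.mk S < κ ↔ IsCardPresentable κ S :=
  ⟨fun h => isCardPresentable_of_small hκ h, fun h => small_of_isCardPresentable hκ h⟩
end
end

section
/- For every regular cardinal κ, κ is sharply less than its cardinal successor κ⁺: for every κ⁺-small set X there is a κ⁺-small cofinal subset of the poset of κ-small subsets of X. -/
universe v u u₂

open CategoryTheory Limits Opposite

noncomputable section

/-- Every regular cardinal is sharply less than its cardinal successor. -/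
theorem stmt3 (κ : Cardinal.{u}) (hκ : κ.IsRegular) :
    SharplyLess κ (Order.succ κ) := by
  refine ⟨Order.lt_succ κ, fun X hX => ?_⟩
  rw [Order.lt_succ_iff] at hX
  have hXκ : Cardinal.mk X ≤ Cardinal.mk κ.ord.ToType := by rw [Cardinal.mk_toType, Cardinal.card_ord]; exact hX
  obtain ⟨f⟩ := hXκ
  -- g : each element of toType gives a κ-small subset
  set g : κ.ord.ToType → {s : Set X // Cardinal.mk s < κ} := fun b =>
    ⟨{x | f x < b}, by
      refine lt_of_le_of_lt ?_ (Cardinal.mk_Iio_ord_toType b)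
      exact Cardinal.mk_le_of_injective (f := fun x : {x : X | f x < b} => (⟨f x.1, x.2⟩ : Set.Iio b))
        (fun a₁ a₂ h => Subtype.ext (f.injective (congrArg Subtype.val h)))⟩ with hg
  refine ⟨Set.range g, ?_, ?_⟩
  · refine lt_of_le_of_lt Cardinal.mk_range_le ?_
    rw [Cardinal.mk_toType, Cardinal.card_ord]
    exact Order.lt_succ κ
  · intro t
    have hT : Cardinal.mk (f '' t.1) < Ordinal.cof κ.ord := by
      rw [hκ.cof_eq]
      exact lt_of_le_of_lt Cardinal.mk_image_le t.2
    obtain ⟨b, hb⟩ := not_isCofinal_iff.1 (fun hc => not_lt.2 (Order.cof_le hc)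
      (by rw [Ordinal.cof_toType]; exact hT))
    exact ⟨g b, Set.mem_range_self b, fun x hx => hb (f x) ⟨x, hx, rfl⟩⟩
end
end

section
/- Let C be a κ-accessible category, A a κ-presentable object, and B a λ-presentable object, where κ is sharply less than λ. If for every κ-presentable object A' the hom-set Hom(A, A') has cardinality < μ, then Hom(A, B) has cardinality < max(λ, μ). -/
universe v u u₂

open CategoryTheory Limits Opposite

noncomputable section

namespace Stmt5Aux

open scoped Classical

variable {J : Type v} [SmallCategory J]

/-- The type of all morphisms of `J`. -/
abbrev Mor (J : Type v) [SmallCategory J] : Type v := Σ p : J × J, p.1 ⟶ p.2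

/-- A morphism as an element of `Mor J`. -/
def mor {a b : J} (f : a ⟶ b) : Mor J := ⟨(a, b), f⟩

/-- The identity of `j` as an element of `Mor J`. -/
def idm (j : J) : Mor J := mor (𝟙 j)

lemma idm_inj : Function.Injective (idm (J := J)) := by
  intro a b h
  exact congrArg (fun m : Mor J => m.1.1) h

/-- A set of morphisms containing the identities of all endpoints of its members. -/
def Unital (w : Set (Mor J)) : Prop := ∀ m ∈ w, idm m.1.1 ∈ w ∧ idm m.1.2 ∈ w

/-- A "good" subcategory datum: a set of morphisms of `J`, of size `< lam`, closed under
composition, and κ-filtered in a suitable sense. -/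
def Good (κ lam : Cardinal.{v}) (M : Set (Mor J)) : Prop :=
  Cardinal.mk M < lam ∧
  (∀ (a b c : J) (f : a ⟶ b) (g : b ⟶ c), mor f ∈ M → mor g ∈ M → mor (f ≫ g) ∈ M) ∧
  (∀ w ⊆ M, Unital w → Cardinal.mk w < κ →
    ∃ (z : J) (_ : idm z ∈ M) (g : ∀ a : J, idm a ∈ w → (a ⟶ z)),
      (∀ a ha, mor (g a ha) ∈ M) ∧
      (∀ (a b : J) (f : a ⟶ b), mor f ∈ w → ∀ ha hb, f ≫ g b hb = g a ha))

/-- Objects of the subcategory associated to `M`. -/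
def SOb (M : Set (Mor J)) : Type v := {j : J // idm j ∈ M}

variable {κ lam : Cardinal.{v}}

/-- The (non-full) subcategory of `J` determined by a good set `M`. -/
instance sCat (M : {M : Set (Mor J) // Good κ lam M}) : SmallCategory (SOb M.1) where
  Hom a b := {f : a.1 ⟶ b.1 // mor f ∈ M.1}
  id a := ⟨𝟙 a.1, a.2⟩
  comp {a b c} f g := ⟨f.1 ≫ g.1, M.2.2.1 a.1 b.1 c.1 f.1 g.1 f.2 g.2⟩
  id_comp f := by apply Subtype.ext; simp
  comp_id f := by apply Subtype.ext; simp
  assoc f g h := by apply Subtype.ext; simp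

/-- Inclusion functor. -/
def incl (M : {M : Set (Mor J) // Good κ lam M}) : SOb M.1 ⥤ J where
  obj a := a.1
  map f := f.1

/-- The subcategory of a good set is `κ`-filtered. -/
lemma sFilt (M : {M : Set (Mor J) // Good κ lam M}) :
    IsCardFiltered (SOb M.1) κ := by
  intro K _ hK D
  -- the set of images of morphisms of K
  set w : Set (Mor J) := {m | ∃ (k k' : K) (φ : k ⟶ k'), m = mor (D.map φ).1} with hw
  have hwM : w ⊆ M.1 := by rintro m ⟨k, k', φ, rfl⟩; exact (D.map φ).2
  have hidm : ∀ k : K, idm (D.obj k).1 ∈ w := by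
    intro k
    refine ⟨k, k, 𝟙 k, ?_⟩
    rw [D.map_id]
    rfl
  have hwu : Unital w := by
    rintro m ⟨k, k', φ, rfl⟩
    exact ⟨hidm k, hidm k'⟩
  have hwcard : Cardinal.mk w < κ := by
    refine lt_of_le_of_lt (Cardinal.mk_le_of_surjective
      (f := fun (s : Σ p : K × K, p.1 ⟶ p.2) => (⟨mor (D.map s.2).1, s.1.1, s.1.2, s.2, rfl⟩ : w))
      ?_) hK
    rintro ⟨m, k, k', φ, rfl⟩
    exact ⟨⟨(k, k'), φ⟩, rfl⟩
  obtain ⟨z, hz, g, hgM, hrel⟩ := M.2.2.2 w hwM hwu hwcard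
  refine ⟨Cocone.mk ⟨z, hz⟩
    (NatTrans.mk (fun k => ⟨g (D.obj k).1 (hidm k), hgM _ _⟩) (fun k k' φ => ?_))⟩
  erw [Functor.const_obj_map, Category.comp_id]
  apply Subtype.ext
  have := hrel (D.obj k).1 (D.obj k').1 (D.map φ).1 ⟨k, k', φ, rfl⟩ (hidm k) (hidm k')
  exact this



section KSup

variable (w : Set (Mor J))

/-- Auxiliary morphism type for the "coequalizing" category. -/
inductive BH : Option {a : J // idm a ∈ w} → Option {a : J // idm a ∈ w} → Type v
  | id (x : Option {a : J // idm a ∈ w}) : BH x x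
  | toe (a : {a : J // idm a ∈ w}) : BH (some a) none
  | elt (m : w) (a : {a : J // idm a ∈ w}) (h : m.1.1.1 = a.1) : BH (some a) none

instance bCat : SmallCategory (Option {a : J // idm a ∈ w}) where
  Hom x y := BH w x y
  id x := BH.id x
  comp {x y z} f g :=
    match x, y, f with
    | _, _, BH.id _ => g
    | _, _, BH.toe a => (match z, g with | _, BH.id _ => BH.toe a)
    | _, _, BH.elt m a h => (match z, g with | _, BH.id _ => BH.elt m a h)
  id_comp f := rfl
  comp_id f := by cases f <;> rfl
  assoc f g h := by cases f <;> cases g <;> cases h <;> rfl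

/-- Encoding of the morphisms of the coequalizing category. -/
def bEnc' {x y : Option {a : J // idm a ∈ w}} :
    BH w x y → (Option {a : J // idm a ∈ w}) ⊕ ({a : J // idm a ∈ w} ⊕ w)
  | BH.id x => Sum.inl x
  | BH.toe a => Sum.inr (Sum.inl a)
  | BH.elt m _ _ => Sum.inr (Sum.inr m)

def bEnc (s : Σ p : (Option {a : J // idm a ∈ w}) × (Option {a : J // idm a ∈ w}),
    BH w p.1 p.2) : (Option {a : J // idm a ∈ w}) ⊕ ({a : J // idm a ∈ w} ⊕ w) :=
  bEnc' w s.2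

variable {w}

lemma bEnc_inj : Function.Injective (bEnc w) := by
  rintro ⟨⟨x, y⟩, f⟩ ⟨⟨x', y'⟩, f'⟩ h
  cases f <;> cases f' <;> simp only [bEnc, bEnc'] at h
  case id.id =>
    obtain rfl : x = x' := Sum.inl.inj h
    rfl
  case id.toe => cases h
  case id.elt => cases h
  case toe.id => cases h
  case toe.toe a a' =>
    obtain rfl : a = a' := Sum.inl.inj (Sum.inr.inj h)
    rfl
  case toe.elt => cases h
  case elt.id => cases h
  case elt.toe => cases h
  case elt.elt m a hm m' a' hm' =>
    obtain rfl : m = m' := Sum.inr.inj (Sum.inr.inj h)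
    obtain rfl : a = a' := Subtype.ext (hm.symm.trans hm')
    rfl

lemma subO_card_le : Cardinal.mk {a : J // idm a ∈ w} ≤ Cardinal.mk w := by
  refine Cardinal.mk_le_of_injective
    (f := fun a : {a : J // idm a ∈ w} => (⟨idm a.1, a.2⟩ : w)) ?_
  intro a b h
  exact Subtype.ext (idm_inj (congrArg Subtype.val h))

variable {κ : Cardinal.{v}}

lemma bCard (hκ : κ.IsRegular) (hw : Cardinal.mk w < κ) :
    CardSmallCat (Option {a : J // idm a ∈ w}) κ := by
  have hO : Cardinal.mk {a : J // idm a ∈ w} < κ := lt_of_le_of_lt subO_card_le hw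
  have heq : Cardinal.mk (Σ p : (Option {a : J // idm a ∈ w}) × (Option {a : J // idm a ∈ w}),
      p.1 ⟶ p.2) = Cardinal.mk (Σ p : (Option {a : J // idm a ∈ w}) ×
      (Option {a : J // idm a ∈ w}), BH w p.1 p.2) := rfl
  rw [CardSmallCat, heq]
  refine lt_of_le_of_lt (Cardinal.mk_le_of_injective (bEnc_inj (w := w))) ?_
  simp only [Cardinal.mk_sum, Cardinal.mk_option, Cardinal.lift_id]
  have h1 : (1 : Cardinal.{v}) < κ := lt_of_lt_of_le Cardinal.one_lt_aleph0 hκ.aleph0_le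
  exact Cardinal.add_lt_of_lt hκ.aleph0_le (Cardinal.add_lt_of_lt hκ.aleph0_le hO h1)
    (Cardinal.add_lt_of_lt hκ.aleph0_le hO hw)

/-- The coequalizing diagram in `J`. -/
def bFun (hu : Unital w)
    (c₁ : Cocone (Discrete.functor (fun a : {a : J // idm a ∈ w} => a.1))) :
    (Option {a : J // idm a ∈ w}) ⥤ J where
  obj x := match x with
    | some a => a.1
    | none => c₁.pt
  map {x y} f := match x, y, f with
    | _, _, BH.id _ => 𝟙 _
    | _, _, BH.toe a => c₁.ι.app ⟨a⟩
    | _, _, BH.elt m a h => eqToHom h.symm ≫ m.1.2 ≫ c₁.ι.app ⟨⟨m.1.1.2, (hu m.1 m.2).2⟩⟩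
  map_id x := rfl
  map_comp {x y z} f g := by
    change BH w x y at f; cases f
    case id => dsimp only; exact (Category.id_comp (obj := J) _).symm
    case toe => change BH w none z at g; cases g; dsimp only; exact (Category.comp_id (obj := J) _).symm
    case elt => change BH w none z at g; cases g; dsimp only; exact (Category.comp_id (obj := J) _).symm

lemma ksup (hκ : κ.IsRegular) (hJ : IsCardFiltered J κ) (hu : Unital w)
    (hw : Cardinal.mk w < κ) :
    ∃ (z : J) (g : ∀ a : J, idm a ∈ w → (a ⟶ z)),
      ∀ (a b : J) (f : a ⟶ b), mor f ∈ w → ∀ ha hb, f ≫ g b hb = g a ha := by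
  classical
  have hO : Cardinal.mk {a : J // idm a ∈ w} < κ := lt_of_le_of_lt subO_card_le hw
  -- Step A: a cocone over the discrete diagram of all endpoints
  have hdisc : CardSmallCat (Discrete {a : J // idm a ∈ w}) κ := by
    have hinj : Function.Injective
        (fun s : Σ p : Discrete {a : J // idm a ∈ w} × Discrete {a : J // idm a ∈ w},
            p.1 ⟶ p.2 => (s.1.1.as, s.1.2.as)) := by
      rintro ⟨⟨⟨x⟩, ⟨y⟩⟩, ⟨⟨(rfl : x = y)⟩⟩⟩ ⟨⟨⟨x'⟩, ⟨y'⟩⟩, ⟨⟨(rfl : x' = y')⟩⟩⟩ h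
      simp only [Prod.mk.injEq] at h
      obtain ⟨rfl, -⟩ := h
      rfl
    refine lt_of_le_of_lt (Cardinal.mk_le_of_injective hinj) ?_
    rw [Cardinal.mk_prod, Cardinal.lift_id]
    exact Cardinal.mul_lt_of_lt hκ.aleph0_le hO hO
  obtain ⟨c₁⟩ := hJ (Discrete {a : J // idm a ∈ w}) hdisc
    (Discrete.functor (fun a => a.1))
  obtain ⟨c₂⟩ := hJ (Option {a : J // idm a ∈ w}) (bCard hκ hw) (bFun hu c₁)
  refine ⟨c₂.pt, fun a ha => c₂.ι.app (some ⟨a, ha⟩), ?_⟩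
  intro a b f hf ha hb
  have h1 := c₂.w (BH.toe (w := w) ⟨b, hb⟩)
  have h2 := c₂.w (BH.elt (w := w) ⟨mor f, hf⟩ ⟨a, ha⟩ rfl)
  have hD1 : (bFun hu c₁).map (BH.toe (w := w) ⟨b, hb⟩) = c₁.ι.app ⟨⟨b, hb⟩⟩ := rfl
  have hD2 : (bFun hu c₁).map (BH.elt (w := w) ⟨mor f, hf⟩ ⟨a, ha⟩ rfl) =
      eqToHom rfl ≫ f ≫ c₁.ι.app ⟨⟨b, hb⟩⟩ := rfl
  rw [hD1] at h1
  rw [hD2] at h2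
  simp only [eqToHom_refl, Category.id_comp, Category.assoc] at h2
  dsimp only
  rw [← h1]
  exact (Category.assoc _ _ _).symm.trans h2

end KSup

/-- Union bound for `< c` many sets of size `< c`, `c` regular. -/
lemma mk_iUnion_lt {α ι : Type v} {f : ι → Set α} {c : Cardinal.{v}} (hc : c.IsRegular)
    (hι : Cardinal.mk ι < c) (hf : ∀ i, Cardinal.mk (f i) < c) :
    Cardinal.mk (⋃ i, f i) < c :=
  lt_of_le_of_lt Cardinal.mk_iUnion_le_sum_mk (Cardinal.sum_lt_of_isRegular hc hι hf)

section Closure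

variable {κ lam : Cardinal.{v}}
variable (hκ : κ.IsRegular) (hJ : IsCardFiltered J κ)

/-- Vertex of a chosen compatible cocone over a unital κ-small set of morphisms. -/
def cocZ {w : Set (Mor J)} (hu : Unital w) (hw : Cardinal.mk w < κ) : J :=
  (ksup hκ hJ hu hw).choose

/-- Components of the chosen compatible cocone. -/
def cocG {w : Set (Mor J)} (hu : Unital w) (hw : Cardinal.mk w < κ) :
    ∀ a : J, idm a ∈ w → (a ⟶ cocZ hκ hJ hu hw) :=
  (ksup hκ hJ hu hw).choose_spec.choose

lemma cocRel {w : Set (Mor J)} (hu : Unital w) (hw : Cardinal.mk w < κ) :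
    ∀ (a b : J) (f : a ⟶ b), mor f ∈ w →
      ∀ ha hb, f ≫ cocG hκ hJ hu hw b hb = cocG hκ hJ hu hw a ha :=
  (ksup hκ hJ hu hw).choose_spec.choose_spec

/-- All the data of the chosen cocone, as a set of morphisms. -/
def cocSet (w : Set (Mor J)) : Set (Mor J) :=
  if h : Unital w ∧ Cardinal.mk w < κ then
    {idm (cocZ hκ hJ h.1 h.2)} ∪ ⋃ a : {a : J // idm a ∈ w}, {mor (cocG hκ hJ h.1 h.2 a.1 a.2)}
  else ∅

lemma cocZ_mem {w : Set (Mor J)} (h : Unital w ∧ Cardinal.mk w < κ) :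
    idm (cocZ hκ hJ h.1 h.2) ∈ cocSet hκ hJ w := by
  rw [cocSet, dif_pos h]
  exact Or.inl rfl

lemma cocG_mem {w : Set (Mor J)} (h : Unital w ∧ Cardinal.mk w < κ) (a : J) (ha : idm a ∈ w) :
    mor (cocG hκ hJ h.1 h.2 a ha) ∈ cocSet hκ hJ w := by
  rw [cocSet, dif_pos h]
  refine Or.inr (Set.mem_iUnion.2 ⟨⟨a, ha⟩, rfl⟩)

lemma cocSet_card (w : Set (Mor J)) : Cardinal.mk (cocSet hκ hJ w) < κ := by
  rw [cocSet]
  split_ifs with h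
  · refine lt_of_le_of_lt (Cardinal.mk_union_le _ _) ?_
    refine Cardinal.add_lt_of_lt hκ.aleph0_le
      (lt_of_le_of_lt (le_of_eq (Cardinal.mk_singleton _))
        (lt_of_lt_of_le Cardinal.one_lt_aleph0 hκ.aleph0_le)) ?_
    refine lt_of_le_of_lt Cardinal.mk_iUnion_le_sum_mk ?_
    refine lt_of_le_of_lt (Cardinal.sum_le_sum _ (fun _ => 1)
      (fun i => le_of_eq (Cardinal.mk_singleton _))) ?_
    rw [Cardinal.sum_const', mul_one]
    exact lt_of_le_of_lt subO_card_le h.2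
  · simp only [Cardinal.mk_emptyCollection]
    exact lt_of_lt_of_le Cardinal.aleph0_pos hκ.aleph0_le

/-- Add identities of all endpoints. -/
def unitize (X : Set (Mor J)) : Set (Mor J) :=
  X ∪ ⋃ m : X, {idm m.1.1.1, idm m.1.1.2}

lemma subset_unitize (X : Set (Mor J)) : X ⊆ unitize X := Set.subset_union_left

lemma unital_unitize (X : Set (Mor J)) : Unital (unitize X) := by
  rintro m (hm | hm)
  · constructor
    · exact Or.inr (Set.mem_iUnion.2 ⟨⟨m, hm⟩, Or.inl rfl⟩)
    · exact Or.inr (Set.mem_iUnion.2 ⟨⟨m, hm⟩, Or.inr rfl⟩)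
  · obtain ⟨n, hn⟩ := Set.mem_iUnion.1 hm
    have : idm m.1.1 ∈ ({idm n.1.1.1, idm n.1.1.2} : Set (Mor J)) ∧
        idm m.1.2 ∈ ({idm n.1.1.1, idm n.1.1.2} : Set (Mor J)) := by
      rcases hn with h | h <;> subst h
      · exact ⟨Or.inl rfl, Or.inl rfl⟩
      · exact ⟨Or.inr rfl, Or.inr rfl⟩
    constructor
    · exact Or.inr (Set.mem_iUnion.2 ⟨n, this.1⟩)
    · exact Or.inr (Set.mem_iUnion.2 ⟨n, this.2⟩)

include hκ in
lemma unitize_card {X : Set (Mor J)} (hX : Cardinal.mk X < κ) :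
    Cardinal.mk (unitize X) < κ := by
  refine lt_of_le_of_lt (Cardinal.mk_union_le _ _) ?_
  refine Cardinal.add_lt_of_lt hκ.aleph0_le hX ?_
  refine lt_of_le_of_lt Cardinal.mk_iUnion_le_sum_mk ?_
  refine lt_of_le_of_lt (Cardinal.sum_le_sum _ (fun _ => 2) (fun i => ?_)) ?_
  · refine le_trans Cardinal.mk_insert_le ?_
    rw [Cardinal.mk_singleton]
    norm_num
  · rw [Cardinal.sum_const']
    exact Cardinal.mul_lt_of_lt hκ.aleph0_le hX
      (lt_of_lt_of_le (Cardinal.nat_lt_aleph0 2) hκ.aleph0_le)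

/-- Composites of pairs. -/
def cmpSet (m n : Mor J) : Set (Mor J) :=
  if h : m.1.2 = n.1.1 then {⟨(m.1.1, n.1.2), m.2 ≫ eqToHom h ≫ n.2⟩} else ∅

lemma cmpSet_card (m n : Mor J) : Cardinal.mk (cmpSet m n) ≤ 1 := by
  rw [cmpSet]
  split_ifs
  · exact le_of_eq (Cardinal.mk_singleton _)
  · simp

lemma mem_cmpSet {a b c : J} (f : a ⟶ b) (g : b ⟶ c) :
    mor (f ≫ g) ∈ cmpSet (mor f) (mor g) := by
  have h : (mor f).1.2 = (mor g).1.1 := rfl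
  rw [cmpSet, dif_pos h]
  have h2 : eqToHom h = 𝟙 b := eqToHom_refl b h
  refine Set.mem_singleton_iff.2 ?_
  rw [h2]
  simp [mor]

variable (hsharp : SharplyLess κ lam)

/-- Chosen cofinal family of κ-small subsets. -/
def famSet (Y : Set (Mor J)) (h : Cardinal.mk Y < lam) :
    Set {s : Set Y // Cardinal.mk s < κ} :=
  (hsharp.2 Y h).choose

lemma famSet_card (Y : Set (Mor J)) (h : Cardinal.mk Y < lam) :
    Cardinal.mk (famSet hsharp Y h) < lam :=
  (hsharp.2 Y h).choose_spec.1

lemma famSet_cof (Y : Set (Mor J)) (h : Cardinal.mk Y < lam)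
    (t : {s : Set Y // Cardinal.mk s < κ}) :
    ∃ u ∈ famSet hsharp Y h, t.1 ⊆ u.1 :=
  (hsharp.2 Y h).choose_spec.2 t

/-- One closure step. -/
def step (Y : Set (Mor J)) : Set (Mor J) :=
  Y ∪ (⋃ p : Y × Y, cmpSet p.1.1 p.2.1) ∪
    (if h : Cardinal.mk Y < lam then
      ⋃ u : famSet hsharp Y h, cocSet hκ hJ (unitize (Subtype.val '' u.1.1))
    else ∅)

lemma subset_step (Y : Set (Mor J)) : Y ⊆ step hκ hJ hsharp Y :=
  fun _ hm => Or.inl (Or.inl hm)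

lemma step_comp {Y : Set (Mor J)} {a b c : J} {f : a ⟶ b} {g : b ⟶ c}
    (hf : mor f ∈ Y) (hg : mor g ∈ Y) : mor (f ≫ g) ∈ step hκ hJ hsharp Y :=
  Or.inl (Or.inr (Set.mem_iUnion.2 ⟨(⟨mor f, hf⟩, ⟨mor g, hg⟩), mem_cmpSet f g⟩))

lemma step_card (hlam : lam.IsRegular) (hkl : κ < lam) {Y : Set (Mor J)}
    (hY : Cardinal.mk Y < lam) : Cardinal.mk (step hκ hJ hsharp Y) < lam := by
  refine lt_of_le_of_lt (Cardinal.mk_union_le _ _) (Cardinal.add_lt_of_lt hlam.aleph0_le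
    (lt_of_le_of_lt (Cardinal.mk_union_le _ _) (Cardinal.add_lt_of_lt hlam.aleph0_le hY ?_)) ?_)
  · refine lt_of_le_of_lt Cardinal.mk_iUnion_le_sum_mk ?_
    refine lt_of_le_of_lt (Cardinal.sum_le_sum _ (fun _ => 1) (fun p => cmpSet_card _ _)) ?_
    rw [Cardinal.sum_const', mul_one, Cardinal.mk_prod, Cardinal.lift_id]
    exact Cardinal.mul_lt_of_lt hlam.aleph0_le hY hY
  · rw [dif_pos hY]
    refine mk_iUnion_lt hlam ?_ ?_
    · exact famSet_card hsharp Y hY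
    · intro u
      exact lt_trans (cocSet_card hκ hJ _) hkl

lemma step_filt (hY : Cardinal.mk (Y : Set (Mor J)) < lam) {w : Set (Mor J)} (hwY : w ⊆ Y)
    (hu : Unital w) (hw : Cardinal.mk w < κ) :
    ∃ (z : J) (_ : idm z ∈ step hκ hJ hsharp Y) (g : ∀ a : J, idm a ∈ w → (a ⟶ z)),
      (∀ a ha, mor (g a ha) ∈ step hκ hJ hsharp Y) ∧
      (∀ (a b : J) (f : a ⟶ b), mor f ∈ w → ∀ ha hb, f ≫ g b hb = g a ha) := by
  -- pull w back to a subset of ↥Y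
  set t : Set Y := {y : Y | y.1 ∈ w} with ht
  have htw : Cardinal.mk t = Cardinal.mk w := by
    refine Cardinal.mk_congr ⟨fun y => ⟨y.1.1, y.2⟩, fun m => ⟨⟨m.1, hwY m.2⟩, m.2⟩,
      fun y => rfl, fun m => rfl⟩
  obtain ⟨u, huS, hsub⟩ := famSet_cof hsharp Y hY ⟨t, by rw [htw]; exact hw⟩
  set w'' := unitize (Subtype.val '' u.1) with hw''
  have hww : w ⊆ w'' := by
    intro m hm
    exact subset_unitize _ ⟨⟨m, hwY hm⟩, hsub hm, rfl⟩
  have hcond : Unital w'' ∧ Cardinal.mk w'' < κ := by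
    refine ⟨unital_unitize _, unitize_card hκ ?_⟩
    exact lt_of_le_of_lt Cardinal.mk_image_le u.2
  have hstep : cocSet hκ hJ w'' ⊆ step hκ hJ hsharp Y := by
    intro m hm
    refine Or.inr ?_
    rw [dif_pos hY]
    exact Set.mem_iUnion.2 ⟨⟨u, huS⟩, hm⟩
  refine ⟨cocZ hκ hJ hcond.1 hcond.2, hstep (cocZ_mem hκ hJ hcond),
    fun a ha => cocG hκ hJ hcond.1 hcond.2 a (hww ha), fun a ha => hstep (cocG_mem hκ hJ hcond a _), ?_⟩
  intro a b f hf ha hb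
  exact cocRel hκ hJ hcond.1 hcond.2 a b f (hww hf) _ _

variable (M₀ : Set (Mor J))

/-- The transfinite iteration of `step`. -/
def chainN (x : κ.ord.ToType) : Set (Mor J) :=
  step hκ hJ hsharp (M₀ ∪ ⋃ y : {y : κ.ord.ToType // y < x}, chainN y.1)
termination_by x
decreasing_by exact y.2

lemma chainN_eq (x : κ.ord.ToType) :
    chainN hκ hJ hsharp M₀ x =
      step hκ hJ hsharp (M₀ ∪ ⋃ y : {y : κ.ord.ToType // y < x}, chainN hκ hJ hsharp M₀ y.1) := by
  rw [chainN]

include hκ hJ hsharp in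
lemma closure (hlam : lam.IsRegular) (hkl : κ < lam) (hM₀ : Cardinal.mk M₀ < lam) :
    ∃ M : Set (Mor J), M₀ ⊆ M ∧ Good κ lam M := by
  classical
  have hκ0 : (0 : Cardinal.{v}) < κ := lt_of_lt_of_le Cardinal.aleph0_pos hκ.aleph0_le
  haveI : Nonempty κ.ord.ToType := Ordinal.toType_nonempty_iff_ne_zero.2 (by
    intro h
    have : κ = 0 := Cardinal.ord_injective (by rw [h, Cardinal.ord_zero])
    exact absurd this (ne_of_gt hκ0))
  haveI : NoMaxOrder κ.ord.ToType := Cardinal.noMaxOrder hκ.aleph0_le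
  have hWcard : Cardinal.mk κ.ord.ToType = κ := by rw [Cardinal.mk_toType, Cardinal.card_ord]
  -- the argument of the step at stage x
  set arg : κ.ord.ToType → Set (Mor J) :=
    fun x => M₀ ∪ ⋃ y : {y : κ.ord.ToType // y < x}, chainN hκ hJ hsharp M₀ y.1 with harg
  have hsub : ∀ x, arg x ⊆ chainN hκ hJ hsharp M₀ x := by
    intro x
    rw [chainN_eq]
    exact subset_step hκ hJ hsharp _
  have hM₀sub : ∀ x, M₀ ⊆ chainN hκ hJ hsharp M₀ x :=
    fun x => le_trans Set.subset_union_left (hsub x)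
  have hmono : ∀ {x y : κ.ord.ToType}, y < x →
      chainN hκ hJ hsharp M₀ y ⊆ arg x := by
    intro x y hyx m hm
    exact Or.inr (Set.mem_iUnion.2 ⟨⟨y, hyx⟩, hm⟩)
  -- cardinality of each stage
  have hcard : ∀ x, Cardinal.mk (chainN hκ hJ hsharp M₀ x) < lam := by
    intro x
    induction x using WellFoundedLT.induction with
    | ind x IH =>
      rw [chainN_eq]
      refine step_card hκ hJ hsharp hlam hkl ?_
      refine lt_of_le_of_lt (Cardinal.mk_union_le _ _) (Cardinal.add_lt_of_lt hlam.aleph0_le hM₀ ?_)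
      refine mk_iUnion_lt hlam ?_ (fun y => IH y.1 y.2)
      exact lt_of_le_of_lt (le_trans (Cardinal.mk_subtype_le _) (le_of_eq hWcard)) hkl
  have hargcard : ∀ x, Cardinal.mk (arg x) < lam := by
    intro x
    refine lt_of_le_of_lt (Cardinal.mk_union_le _ _) (Cardinal.add_lt_of_lt hlam.aleph0_le hM₀ ?_)
    refine mk_iUnion_lt hlam ?_ (fun y => hcard y.1)
    exact lt_of_le_of_lt (le_trans (Cardinal.mk_subtype_le _) (le_of_eq hWcard)) hkl
  -- the closure
  refine ⟨⋃ x, chainN hκ hJ hsharp M₀ x, ?_, ?_, ?_, ?_⟩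
  · intro m hm
    exact Set.mem_iUnion.2 ⟨Classical.arbitrary _, hM₀sub _ hm⟩
  · exact mk_iUnion_lt hlam (lt_of_le_of_lt (le_of_eq hWcard) hkl) hcard
  · -- composition
    intro a b c f g hf hg
    obtain ⟨x1, hx1⟩ := Set.mem_iUnion.1 hf
    obtain ⟨x2, hx2⟩ := Set.mem_iUnion.1 hg
    obtain ⟨x3, hx3⟩ := exists_gt (max x1 x2)
    have h1 : mor f ∈ arg x3 := hmono (lt_of_le_of_lt (le_max_left _ _) hx3) hx1
    have h2 : mor g ∈ arg x3 := hmono (lt_of_le_of_lt (le_max_right _ _) hx3) hx2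
    refine Set.mem_iUnion.2 ⟨x3, ?_⟩
    rw [chainN_eq]
    exact step_comp hκ hJ hsharp h1 h2
  · -- filteredness
    intro w hwM hu hw
    -- bound the stages
    have hbound : ∃ x, w ⊆ arg x := by
      have hchoice : ∀ m : w, ∃ x, m.1 ∈ chainN hκ hJ hsharp M₀ x :=
        fun m => Set.mem_iUnion.1 (hwM m.2)
      choose st hst using hchoice
      haveI : IsWellOrder κ.ord.ToType (· < ·) := isWellOrder_lt
      have hbdd : Set.Bounded (· < ·) (Set.range st) := by
        refine not_isCofinal_iff.1 (fun hcof => ?_)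
        have hle := Order.cof_le hcof
        rw [Ordinal.cof_toType, hκ.cof_ord] at hle
        exact absurd (lt_of_le_of_lt Cardinal.mk_range_le hw) (not_lt.2 hle)
      obtain ⟨b, hb⟩ := hbdd
      obtain ⟨x, hx⟩ := exists_gt b
      refine ⟨x, fun m hm => ?_⟩
      have hle : st ⟨m, hm⟩ ≤ b := le_of_lt (hb (st ⟨m, hm⟩) (Set.mem_range_self _))
      exact hmono (lt_of_le_of_lt hle hx) (hst ⟨m, hm⟩)
    obtain ⟨x, hwarg⟩ := hbound
    obtain ⟨z, hz, g, hg, hrel⟩ :=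
      step_filt hκ hJ hsharp (hargcard x) hwarg hu hw
    rw [← chainN_eq] at hz hg
    exact ⟨z, Set.mem_iUnion.2 ⟨x, hz⟩, g, fun a ha => Set.mem_iUnion.2 ⟨x, hg a ha⟩, hrel⟩

end Closure

section Main

variable {C : Type u} [Category.{v} C] {κ lam : Cardinal.{v}}

/-- The poset of good subdiagram data. -/
abbrev PP (κ lam : Cardinal.{v}) (J : Type v) [SmallCategory J] : Type v :=
  {M : Set (Mor J) // Good κ lam M}

lemma PP_filt (hκ : κ.IsRegular) (hlam : lam.IsRegular) (hkl : κ < lam)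
    (hsharp : SharplyLess κ lam) (hJ : IsCardFiltered J κ) :
    IsCardFiltered (PP κ lam J) lam := by
  intro K _ hK D
  have hobj : Cardinal.mk K < lam := by
    refine lt_of_le_of_lt (Cardinal.mk_le_of_injective
      (f := fun k : K => (⟨(k, k), 𝟙 k⟩ : Σ p : K × K, p.1 ⟶ p.2)) ?_) hK
    intro k k' h
    exact congrArg (fun s : Σ p : K × K, p.1 ⟶ p.2 => s.1.1) h
  have hU : Cardinal.mk (⋃ k : K, (D.obj k).1) < lam :=
    mk_iUnion_lt hlam hobj (fun k => (D.obj k).2.1)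
  obtain ⟨M, hM0, hMg⟩ := closure hκ hJ hsharp _ hlam hkl hU
  refine ⟨Cocone.mk ⟨M, hMg⟩ (NatTrans.mk
    (fun k => homOfLE (fun m hm => hM0 (Set.mem_iUnion.2 ⟨k, hm⟩))) (fun k k' f => ?_))⟩
  exact Subsingleton.elim _ _

/-- Map on objects induced by an inclusion of good sets. -/
def sObj {p q : PP κ lam J} (h : p ≤ q) (j : SOb p.1) : SOb q.1 := ⟨j.1, h j.2⟩

/-- Map on morphisms induced by an inclusion of good sets. -/
def sHom {p q : PP κ lam J} (h : p ≤ q) {j j' : SOb p.1} (f : j ⟶ j') :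
    sObj h j ⟶ sObj h j' := ⟨f.1, h f.2⟩

/-- A morphism in a good subcategory. -/
def mkHom {q : PP κ lam J} (x y : SOb q.1) (f : x.1 ⟶ y.1) (hf : mor f ∈ q.1) : x ⟶ y :=
  ⟨f, hf⟩

variable (F : J ⥤ C)

/-- The restricted diagram. -/
def FM (p : PP κ lam J) : SOb p.1 ⥤ C := incl p ⋙ F

variable [∀ p : PP κ lam J, HasColimitsOfShape (SOb p.1) C]

/-- Restriction cocone along an inclusion of good sets. -/
def ccMap {p q : PP κ lam J} (h : p ≤ q) : Cocone (FM F p) where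
  pt := colimit (FM F q)
  ι :=
    { app := fun j => colimit.ι (FM F q) (sObj h j)
      naturality := fun j j' f => by
        simp only [Functor.const_obj_obj, Functor.const_obj_map, Category.comp_id]
        exact (colimit.w (FM F q) (sHom h f)).trans (Category.comp_id _).symm }

/-- The diagram of partial colimits, indexed by the poset of good sets. -/
def Phi : PP κ lam J ⥤ C where
  obj p := colimit (FM F p)
  map {p q} h := colimit.desc (FM F p) (ccMap F (leOfHom h))
  map_id p := by
    refine colimit.hom_ext (fun j => ?_)
    erw [colimit.ι_desc, Category.comp_id]
    rfl
  map_comp {p q r} h h' := by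
    refine colimit.hom_ext (fun j => ?_)
    erw [colimit.ι_desc, colimit.ι_desc_assoc]
    dsimp only [ccMap]
    erw [colimit.ι_desc]
    rfl

lemma ι_phi {p q : PP κ lam J} (h : p ⟶ q) (j : SOb p.1) :
    colimit.ι (FM F p) j ≫ (Phi F).map h = colimit.ι (FM F q) (sObj (leOfHom h) j) := by
  show colimit.ι (FM F p) j ≫ colimit.desc (FM F p) (ccMap F (leOfHom h)) = _
  rw [colimit.ι_desc]
  rfl

variable {F} (c : Cocone F)

/-- The total cocone on a restricted diagram. -/
def ccTot (p : PP κ lam J) : Cocone (FM F p) where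
  pt := c.pt
  ι :=
    { app := fun j => c.ι.app j.1
      naturality := fun j j' f => by
        simp only [Functor.const_obj_obj, Functor.const_obj_map, Category.comp_id]
        exact (c.w f.1).trans (Category.comp_id _).symm }

/-- The induced cocone on the diagram of partial colimits. -/
def Psi : Cocone (Phi (κ := κ) (lam := lam) F) where
  pt := c.pt
  ι :=
    { app := fun p => colimit.desc (FM F p) (ccTot c p)
      naturality := fun p q h => by
        refine colimit.hom_ext (fun j => ?_)
        simp only [Functor.const_obj_obj, Functor.const_obj_map, Category.comp_id]
        erw [← Category.assoc, ι_phi F h j, colimit.ι_desc, Category.comp_id, colimit.ι_desc]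
        rfl }

lemma ι_Psi (p : PP κ lam J) (j : SOb p.1) :
    colimit.ι (FM F p) j ≫ (Psi (κ := κ) (lam := lam) c).ι.app p = c.ι.app j.1 := by
  show colimit.ι (FM F p) j ≫ colimit.desc (FM F p) (ccTot c p) = _
  rw [colimit.ι_desc]
  rfl

lemma compat (s : Cocone (Phi (κ := κ) (lam := lam) F)) {p q : PP κ lam J} (h : p ≤ q)
    (j : SOb p.1) :
    colimit.ι (FM F p) j ≫ s.ι.app p =
      colimit.ι (FM F q) (sObj h j) ≫ s.ι.app q := by
  erw [← s.w (homOfLE h), ← Category.assoc, ι_phi F (homOfLE h) j]; rfl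

lemma psi_isColimit (hκ : κ.IsRegular) (hlam : lam.IsRegular) (hkl : κ < lam)
    (hsharp : SharplyLess κ lam) (hJ : IsCardFiltered J κ) (hc : IsColimit c) :
    Nonempty (IsColimit (Psi (κ := κ) (lam := lam) c)) := by
  classical
  -- a good set containing any lam-small set
  have hgp : ∀ X : Set (Mor J), Cardinal.mk X < lam → {p : PP κ lam J // X ⊆ p.1} := by
    intro X hX
    exact ⟨⟨(closure hκ hJ hsharp X hlam hkl hX).choose,
      (closure hκ hJ hsharp X hlam hkl hX).choose_spec.2⟩,
      (closure hκ hJ hsharp X hlam hkl hX).choose_spec.1⟩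
  have hsing : ∀ j : J, Cardinal.mk ({idm j} : Set (Mor J)) < lam := by
    intro j
    rw [Cardinal.mk_singleton]
    exact lt_of_lt_of_le Cardinal.one_lt_aleph0 hlam.aleph0_le
  let jP : J → PP κ lam J := fun j => (hgp {idm j} (hsing j)).1
  let jO : ∀ j : J, SOb (jP j).1 := fun j => ⟨j, (hgp {idm j} (hsing j)).2 rfl⟩
  -- naturality of the candidate descент cocone
  have hdc : ∀ s : Cocone (Phi (κ := κ) (lam := lam) F), ∀ (j j' : J) (f : j ⟶ j'),
      F.map f ≫ (colimit.ι (FM F (jP j')) (jO j') ≫ s.ι.app (jP j')) =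
        colimit.ι (FM F (jP j)) (jO j) ≫ s.ι.app (jP j) := by
    intro s j j' f
    obtain ⟨q, hq⟩ := hgp ((jP j).1 ∪ (jP j').1 ∪ {mor f})
      (lt_of_le_of_lt (Cardinal.mk_union_le _ _) (Cardinal.add_lt_of_lt hlam.aleph0_le
        (lt_of_le_of_lt (Cardinal.mk_union_le _ _)
          (Cardinal.add_lt_of_lt hlam.aleph0_le (jP j).2.1 (jP j').2.1))
        (lt_of_le_of_lt (le_of_eq (Cardinal.mk_singleton _))
          (lt_of_lt_of_le Cardinal.one_lt_aleph0 hlam.aleph0_le))))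
    have h1 : (jP j) ≤ q := fun m hm => hq (Or.inl (Or.inl hm))
    have h2 : (jP j') ≤ q := fun m hm => hq (Or.inl (Or.inr hm))
    have hf : mor f ∈ q.1 := hq (Or.inr rfl)
    erw [compat s h1 (jO j), compat s h2 (jO j'), ← Category.assoc]
    congr 1
    exact colimit.w (FM F q) (mkHom (sObj h1 (jO j)) (sObj h2 (jO j')) f hf)
  let descC : ∀ _ : Cocone (Phi (κ := κ) (lam := lam) F), Cocone F := fun s =>
    Cocone.mk s.pt (NatTrans.mk (fun j => colimit.ι (FM F (jP j)) (jO j) ≫ s.ι.app (jP j))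
      (fun j j' f => by
        simp only [Functor.const_obj_obj, Functor.const_obj_map, Category.comp_id]
        exact hdc s j j' f))
  refine ⟨{ desc := fun s => hc.desc (descC s), fac := ?_, uniq := ?_ }⟩
  · intro s p
    refine colimit.hom_ext (fun j => ?_)
    erw [← Category.assoc, ι_Psi c p j, hc.fac (descC s) j.1]
    show colimit.ι (FM F (jP j.1)) (jO j.1) ≫ s.ι.app (jP j.1) = colimit.ι (FM F p) j ≫ s.ι.app p
    obtain ⟨q, hq⟩ := hgp ((jP j.1).1 ∪ p.1)
      (lt_of_le_of_lt (Cardinal.mk_union_le _ _)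
        (Cardinal.add_lt_of_lt hlam.aleph0_le (jP j.1).2.1 p.2.1))
    have h1 : (jP j.1) ≤ q := fun m hm => hq (Or.inl hm)
    have h2 : p ≤ q := fun m hm => hq (Or.inr hm)
    rw [compat s h1 (jO j.1), compat s h2 j]
    rfl
  · intro s m hm
    refine hc.uniq (descC s) m (fun j => ?_)
    have h0 : c.ι.app j = colimit.ι (FM F (jP j)) (jO j) ≫
        (Psi (κ := κ) (lam := lam) c).ι.app (jP j) :=
      (ι_Psi c (jP j) (jO j)).symm
    erw [h0, Category.assoc, hm (jP j)]

end Main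

end Stmt5Aux


/-- Estimate for hom-sets out of a `κ`-presentable object into a `lam`-presentable object. -/
theorem stmt5 {C : Type u} [Category.{v} C] (κ lam μ : Cardinal.{v})
    (hκ : κ.IsRegular) (hlam : lam.IsRegular) (hμ : μ.IsRegular)
    (hacc : IsCardAccessible C κ) (hsharp : SharplyLess κ lam)
    (A B : C) (hA : IsCardPresentable κ A) (hB : IsCardPresentable lam B)
    (hhom : ∀ A' : C, IsCardPresentable κ A' → Cardinal.mk (A ⟶ A') < μ) :
    Cardinal.mk (A ⟶ B) < max lam μ := by
  classical
  obtain ⟨hco, G, hGsmall, hGpres, hdec⟩ := hacc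
  obtain ⟨J, instJ, F, c, hJfilt, hGj, ⟨hc⟩, ⟨e⟩⟩ := hdec B
  have hν : (max lam μ).IsRegular := by
    rcases le_total lam μ with h | h
    · rwa [max_eq_right h]
    · rwa [max_eq_left h]
  have hkl : κ < lam := hsharp.1
  haveI : ∀ p : Stmt5Aux.PP κ lam J, HasColimitsOfShape (Stmt5Aux.SOb p.1) C :=
    fun p => hco _ (Stmt5Aux.sFilt p)
  obtain ⟨hψ⟩ := Stmt5Aux.psi_isColimit c hκ hlam hkl hsharp hJfilt hc
  have hPPfilt := Stmt5Aux.PP_filt (J := J) hκ hlam hkl hsharp hJfilt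
  obtain ⟨hpres⟩ := hB (Stmt5Aux.PP κ lam J) hPPfilt
  haveI := hpres
  have hmapped : IsColimit ((coyoneda.obj (op B)).mapCocone
      (Stmt5Aux.Psi (κ := κ) (lam := lam) c)) := isColimitOfPreserves _ hψ
  obtain ⟨p, y, hy⟩ := Types.jointly_surjective _ hmapped (e.inv)
  have hy' : y ≫ (Stmt5Aux.Psi (κ := κ) (lam := lam) c).ι.app p = e.inv := hy
  -- `Hom(A, B)` injects into `Hom(A, colim F|p)`
  have h1 : ∀ φ : A ⟶ B,
      (φ ≫ y) ≫ (Stmt5Aux.Psi (κ := κ) (lam := lam) c).ι.app p ≫ e.hom = φ := by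
    intro φ
    erw [Category.assoc, ← Category.assoc y, hy', e.inv_hom_id, Category.comp_id]
  have hinj : Function.Injective
      (fun φ : A ⟶ B => (φ ≫ y : A ⟶ colimit (Stmt5Aux.FM F p))) := by
    intro φ φ' hfe
    rw [← h1 φ, ← h1 φ']
    exact congrArg (fun ψ => ψ ≫ (Stmt5Aux.Psi (κ := κ) (lam := lam) c).ι.app p ≫ e.hom) hfe
  have hle1 : Cardinal.mk (A ⟶ B) ≤ Cardinal.mk (A ⟶ colimit (Stmt5Aux.FM F p)) :=
    Cardinal.mk_le_of_injective hinj
  -- counting morphisms into the partial colimit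
  obtain ⟨hApres⟩ := hA (Stmt5Aux.SOb p.1) (Stmt5Aux.sFilt p)
  haveI := hApres
  have hcolA : IsColimit ((coyoneda.obj (op A)).mapCocone
      (colimit.cocone (Stmt5Aux.FM F p))) :=
    isColimitOfPreserves _ (colimit.isColimit _)
  have hsurj : Function.Surjective
      (fun s : Σ jj : Stmt5Aux.SOb p.1, (A ⟶ F.obj jj.1) =>
        (s.2 ≫ colimit.ι (Stmt5Aux.FM F p) s.1 : A ⟶ colimit (Stmt5Aux.FM F p))) := by
    intro x
    obtain ⟨jj, z, hz⟩ := Types.jointly_surjective _ hcolA x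
    exact ⟨⟨jj, z⟩, hz⟩
  have hle2 : Cardinal.mk (A ⟶ colimit (Stmt5Aux.FM F p)) ≤
      Cardinal.mk (Σ jj : Stmt5Aux.SOb p.1, (A ⟶ F.obj jj.1)) :=
    Cardinal.mk_le_of_surjective hsurj
  have hsum : Cardinal.mk (Σ jj : Stmt5Aux.SOb p.1, (A ⟶ F.obj jj.1)) < max lam μ := by
    rw [Cardinal.mk_sigma]
    refine Cardinal.sum_lt_of_isRegular hν ?_ ?_
    · exact lt_of_le_of_lt Stmt5Aux.subO_card_le
        (lt_of_lt_of_le p.2.1 (le_max_left _ _))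
    · intro jj
      exact lt_of_lt_of_le (hhom (F.obj jj.1) (hGpres _ (hGj jj.1))) (le_max_right _ _)
  exact lt_of_le_of_lt (le_trans hle1 hle2) hsum
end
end

section
/- Let F : C → D be a strongly κ-accessible functor and let D' be the full subcategory of D spanned by the image of F. Then: (a) every object of D' is a colimit in D of a small κ-filtered diagram of objects of D' that are κ-presentable in D; (b) every κ-presentable object of D' is κ-presentable in D; (c) if D' is closed under small κ-filtered colimits in D, then D' is a κ-accessible category and its inclusion into D is κ-accessible. -/
universe v u u₂

open CategoryTheory Limits Opposite

noncomputable section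

namespace Stmt9Aux

variable {D : Type u₂} [Category.{v} D]

/-- Retracts of objects with colimit-preserving coyoneda also have colimit-preserving
coyoneda. -/
lemma preservesColimitsOfShape_of_retract {A B : D} (s : A ⟶ B) (r : B ⟶ A)
    (hsr : s ≫ r = 𝟙 A) (J : Type v) [SmallCategory J]
    [PreservesColimitsOfShape J (coyoneda.obj (op B))] :
    PreservesColimitsOfShape J (coyoneda.obj (op A)) := by
  constructor
  intro H
  constructor
  intro c hc
  have hcB := isColimitOfPreserves (coyoneda.obj (op B)) hc
  set KA := H ⋙ coyoneda.obj (op A) with hKA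
  set KB := H ⋙ coyoneda.obj (op B) with hKB
  set φ := (colimit.isColimit KA).desc ((coyoneda.obj (op A)).mapCocone c) with hφ
  set ψ := (colimit.isColimit KB).desc ((coyoneda.obj (op B)).mapCocone c) with hψ
  have hφι : ∀ (j : J) (f : A ⟶ H.obj j),
      φ (colimit.ι KA j f) = f ≫ c.ι.app j := by
    intro j f
    exact types_congr_hom ((colimit.isColimit KA).fac ((coyoneda.obj (op A)).mapCocone c) j) f
  have hψι : ∀ (j : J) (g : B ⟶ H.obj j),
      ψ (colimit.ι KB j g) = g ≫ c.ι.app j := by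
    intro j g
    exact types_congr_hom ((colimit.isColimit KB).fac ((coyoneda.obj (op B)).mapCocone c) j) g
  have hψiso : IsIso ψ := by
    have h1 : IsIso ((colimit.isColimit KB).descCoconeMorphism
        ((coyoneda.obj (op B)).mapCocone c)) :=
      IsColimit.hom_isIso (colimit.isColimit KB) hcB _
    have h2 : ψ = (Cocones.forget KB).map ((colimit.isColimit KB).descCoconeMorphism
        ((coyoneda.obj (op B)).mapCocone c)) := rfl
    rw [h2]
    exact Functor.map_isIso _ _
  set σ' : KA ⟶ KB := Functor.whiskerLeft H (coyoneda.map r.op) with hσ'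
  set ρ' : KB ⟶ KA := Functor.whiskerLeft H (coyoneda.map s.op) with hρ'
  have hσι : ∀ (j : J) (f : A ⟶ H.obj j),
      colimMap σ' (colimit.ι KA j f) = colimit.ι KB j (r ≫ f) := by
    intro j f
    exact types_congr_hom (ι_colimMap σ' j) f
  have hρι : ∀ (j : J) (g : B ⟶ H.obj j),
      colimMap ρ' (colimit.ι KB j g) = colimit.ι KA j (s ≫ g) := by
    intro j g
    exact types_congr_hom (ι_colimMap ρ' j) g
  have hsurj : Function.Surjective φ := by
    intro f
    obtain ⟨j, g, hg⟩ := Types.jointly_surjective _ hcB (r ≫ f)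
    refine ⟨colimit.ι KA j (s ≫ g), ?_⟩
    have hg' : g ≫ c.ι.app j = r ≫ f := by simpa using hg
    rw [hφι j (s ≫ g), Category.assoc, hg', ← Category.assoc, hsr, Category.id_comp]
  have hinj : Function.Injective φ := by
    intro x y hxy
    obtain ⟨j, f, hx⟩ := Types.jointly_surjective _ (colimit.isColimit KA) x
    obtain ⟨k, g, hy⟩ := Types.jointly_surjective _ (colimit.isColimit KA) y
    have hx' : colimit.ι KA j f = x := by simpa using hx
    have hy' : colimit.ι KA k g = y := by simpa using hy
    subst hx' hy'
    have hfg : f ≫ c.ι.app j = g ≫ c.ι.app k := by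
      rw [← hφι j f, ← hφι k g, hxy]
    have hψinj : Function.Injective ψ := ((isIso_iff_bijective ψ).1 hψiso).1
    have h1 : colimMap σ' (colimit.ι KA j f) = colimMap σ' (colimit.ι KA k g) := by
      apply hψinj
      rw [hσι, hσι, hψι, hψι, Category.assoc, Category.assoc, hfg]
    have h2 := congrArg (colimMap ρ') h1
    rw [hσι, hσι, hρι, hρι, ← Category.assoc, hsr, Category.id_comp,
      ← Category.assoc, hsr, Category.id_comp] at h2
    exact h2
  have : IsIso φ := (isIso_iff_bijective φ).2 ⟨hinj, hsurj⟩
  exact ⟨IsColimit.ofPointIso (i := hφ ▸ this) (colimit.isColimit KA)⟩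


/-- Lift a cocone in `D` whose diagram and point lie in a full subcategory. -/
@[simps]
def liftCocone (Z : D → Prop) {J : Type v} [SmallCategory J] (H : J ⥤ ObjectProperty.FullSubcategory Z)
    (c : Cocone (H ⋙ ObjectProperty.ι Z)) (hpt : Z c.pt) : Cocone H where
  pt := ⟨c.pt, hpt⟩
  ι :=
    { app := fun j => ObjectProperty.homMk (c.ι.app j)
      naturality := fun i j f => (ObjectProperty.ι Z).map_injective (c.ι.naturality f) }

lemma liftCocone_map (Z : D → Prop) {J : Type v} [SmallCategory J]
    (H : J ⥤ ObjectProperty.FullSubcategory Z) (c : Cocone (H ⋙ ObjectProperty.ι Z)) (hpt : Z c.pt) :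
    (ObjectProperty.ι Z).mapCocone (liftCocone Z H c hpt) = c := rfl

def liftCocone_isColimit (Z : D → Prop) {J : Type v} [SmallCategory J]
    (H : J ⥤ ObjectProperty.FullSubcategory Z) (c : Cocone (H ⋙ ObjectProperty.ι Z))
    (hc : IsColimit c) (hpt : Z c.pt) : IsColimit (liftCocone Z H c hpt) :=
  isColimitOfReflects (ObjectProperty.ι Z)
    (by rw [liftCocone_map]; exact hc)

/-- `coyoneda` of an object of a full subcategory, compared with the ambient `coyoneda`. -/
def coyonedaSubIso (Z : D → Prop) (Y : ObjectProperty.FullSubcategory Z) :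
    coyoneda.obj (op Y) ≅ ObjectProperty.ι Z ⋙ coyoneda.obj (op Y.obj) :=
  NatIso.ofComponents (fun X => Equiv.toIso (ObjectProperty.fullyFaithfulι Z).homEquiv) (fun f => rfl)


variable {C : Type u} [Category.{v} C]

/-- Push a cocone in `C` into the full subcategory of `D` spanned by the image of `F`. -/
@[simps]
def pushCocone (F : C ⥤ D) (Z : D → Prop) (hZ : ∀ X : C, Z (F.obj X)) {J : Type v}
    [SmallCategory J] (K : J ⥤ C) (c : Cocone K) :
    Cocone (ObjectProperty.lift Z (K ⋙ F) fun j => hZ (K.obj j)) where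
  pt := ⟨F.obj c.pt, hZ c.pt⟩
  ι :=
    { app := fun j => ObjectProperty.homMk (F.map (c.ι.app j))
      naturality := fun i j f => by
        have := (F.mapCocone c).ι.naturality f
        exact (ObjectProperty.ι Z).map_injective this }

def pushCocone_isColimit (F : C ⥤ D) (Z : D → Prop) (hZ : ∀ X : C, Z (F.obj X)) {J : Type v}
    [SmallCategory J] (K : J ⥤ C) (c : Cocone K) (hc : IsColimit c)
    [PreservesColimitsOfShape J F] : IsColimit (pushCocone F Z hZ K c) := by
  apply isColimitOfReflects (ObjectProperty.ι Z)
  have h0 : IsColimit (F.mapCocone c) := isColimitOfPreserves F hc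
  have h1 : IsColimit (show Cocone ((ObjectProperty.lift Z (K ⋙ F) fun j => hZ (K.obj j)) ⋙
      ObjectProperty.ι Z) from F.mapCocone c) := h0
  exact h1.ofIsoColimit (Cocones.ext (Iso.refl _) (fun j => by
    dsimp
    erw [Category.comp_id]
    rfl))

end Stmt9Aux

open Stmt9Aux in
/-- The full image of a strongly `κ`-accessible functor. -/
theorem stmt9 {C : Type u} {D : Type u₂} [Category.{v} C] [Category.{v} D]
    (κ : Cardinal.{v}) (hκ : κ.IsRegular) (F : C ⥤ D)
    (hF : StronglyCardAccessible F κ) :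
    (∀ Y : D, (∃ X : C, F.obj X = Y) →
       ∃ (J : Type v) (inst : SmallCategory J) (G : J ⥤ D) (c : Cocone G),
         IsCardFiltered J κ ∧
         (∀ j, (∃ X, F.obj X = G.obj j) ∧ IsCardPresentable κ (G.obj j)) ∧
         Nonempty (IsColimit c) ∧ Nonempty (c.pt ≅ Y)) ∧
    (∀ Y : ObjectProperty.FullSubcategory (fun d => ∃ X, F.obj X = d),
       IsCardPresentable κ Y → IsCardPresentable κ Y.obj) ∧
    ((∀ (J : Type v) [SmallCategory J], IsCardFiltered J κ →
        ∀ (G : J ⥤ D), (∀ j, ∃ X, F.obj X = G.obj j) →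
          ∀ (c : Cocone G), Nonempty (IsColimit c) → ∃ X, F.obj X = c.pt) →
      IsCardAccessible (ObjectProperty.FullSubcategory (fun d => ∃ X, F.obj X = d)) κ ∧
        PreservesCardFiltered (ObjectProperty.ι (fun d => ∃ X, F.obj X = d)) κ) := by
  obtain ⟨hC, hD, hPres, hPresObj⟩ := hF
  obtain ⟨hCcol, GC, hGCsmall, hGCpres, hGCgen⟩ := hC
  set Z : D → Prop := fun d => ∃ X, F.obj X = d with hZdef
  have hZ : ∀ X : C, Z (F.obj X) := fun X => ⟨X, rfl⟩
  refine ⟨?_, ?_, ?_⟩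
  · -- part (a)
    rintro Y ⟨X₀, rfl⟩
    obtain ⟨J, instJ, K, c, hJfil, hKmem, ⟨hcolim⟩, ⟨e⟩⟩ := hGCgen X₀
    haveI := (hPres J hJfil).some
    refine ⟨J, instJ, K ⋙ F, F.mapCocone c, hJfil, ?_,
      ⟨isColimitOfPreserves F hcolim⟩, ⟨F.mapIso e⟩⟩
    intro j
    exact ⟨⟨K.obj j, rfl⟩, hPresObj _ (hGCpres _ (hKmem j))⟩
  · -- part (b)
    intro Y hYpres
    obtain ⟨X₀, hX₀⟩ := Y.2
    obtain ⟨J, instJ, K, c, hJfil, hKmem, ⟨hcolim⟩, ⟨e⟩⟩ := hGCgen X₀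
    haveI := (hPres J hJfil).some
    set H : J ⥤ ObjectProperty.FullSubcategory Z :=
      ObjectProperty.lift Z (K ⋙ F) fun j => hZ (K.obj j) with hHdef
    set cc : Cocone H := pushCocone F Z hZ K c with hccdef
    have hcc : IsColimit cc := pushCocone_isColimit F Z hZ K c hcolim
    haveI := (hYpres J hJfil).some
    have hcY : IsColimit ((coyoneda.obj (op Y)).mapCocone cc) :=
      isColimitOfPreserves (coyoneda.obj (op Y)) hcc
    have e' : cc.pt ≅ Y :=
      (ObjectProperty.ι Z).preimageIso (F.mapIso e ≪≫ eqToIso hX₀)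
    obtain ⟨j, g, hg⟩ := Types.jointly_surjective _ hcY e'.inv
    have hg' : g ≫ cc.ι.app j = e'.inv := hg
    have hretr : g ≫ (cc.ι.app j ≫ e'.hom) = 𝟙 Y := by
      rw [← Category.assoc, hg']; exact e'.inv_hom_id
    intro J' instJ' hJ'fil
    haveI := (hPresObj (K.obj j) (hGCpres _ (hKmem j)) J' hJ'fil).some
    exact ⟨preservesColimitsOfShape_of_retract
      (show Y.obj ⟶ F.obj (K.obj j) from g.hom)
      (show F.obj (K.obj j) ⟶ Y.obj from (cc.ι.app j ≫ e'.hom).hom) ((ObjectProperty.ι Z).congr_map hretr) J'⟩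
  · -- part (c)
    intro hclosed
    have hasCol : ∀ (J : Type v) (instJ : SmallCategory J), IsCardFiltered J κ →
        HasColimitsOfShape J (ObjectProperty.FullSubcategory Z) := by
      intro J instJ hJ
      haveI := hD.1 J hJ
      constructor
      intro H
      set c := colimit.cocone (H ⋙ ObjectProperty.ι Z)
      obtain ⟨X, hX⟩ := hclosed J hJ (H ⋙ ObjectProperty.ι Z)
        (fun j => (H.obj j).2) c ⟨colimit.isColimit _⟩
      exact HasColimit.mk ⟨liftCocone Z H c ⟨X, hX⟩,
        liftCocone_isColimit Z H c (colimit.isColimit _) ⟨X, hX⟩⟩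
    have presIncl : ∀ (J : Type v) (instJ : SmallCategory J), IsCardFiltered J κ →
        PreservesColimitsOfShape J (ObjectProperty.ι Z) := by
      intro J instJ hJ
      haveI := hD.1 J hJ
      constructor
      intro H
      constructor
      intro t ht
      set c := colimit.cocone (H ⋙ ObjectProperty.ι Z)
      obtain ⟨X, hX⟩ := hclosed J hJ (H ⋙ ObjectProperty.ι Z)
        (fun j => (H.obj j).2) c ⟨colimit.isColimit _⟩
      have h1 := liftCocone_isColimit Z H c (colimit.isColimit _) ⟨X, hX⟩
      have h2 : IsColimit ((ObjectProperty.ι Z).mapCocone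
          (liftCocone Z H c ⟨X, hX⟩)) := by
        rw [liftCocone_map]; exact colimit.isColimit _
      exact ⟨h2.ofIsoColimit ((Cocones.functoriality H (ObjectProperty.ι Z)).mapIso
        (h1.uniqueUpToIso ht))⟩
    have presTrans : ∀ Y : ObjectProperty.FullSubcategory Z,
        IsCardPresentable κ Y.obj → IsCardPresentable κ Y := by
      intro Y hY J instJ hJ
      haveI := presIncl J instJ hJ
      haveI := (hY J hJ).some
      haveI : PreservesColimitsOfShape J
          (ObjectProperty.ι Z ⋙ coyoneda.obj (op Y.obj)) :=
        inferInstance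
      exact ⟨preservesColimitsOfShape_of_natIso (coyonedaSubIso Z Y).symm⟩
    refine ⟨⟨fun J instJ hJ => hasCol J instJ hJ, ?_⟩, fun J instJ hJ => ⟨presIncl J instJ hJ⟩⟩
    refine ⟨(fun A : C => (⟨F.obj A, hZ A⟩ : ObjectProperty.FullSubcategory Z)) '' GC, ?_, ?_, ?_⟩
    · haveI := hGCsmall
      exact small_of_surjective (f := fun a : GC =>
        (⟨(⟨F.obj a.1, hZ a.1⟩ : ObjectProperty.FullSubcategory Z), ⟨a.1, a.2, rfl⟩⟩ :
          ((fun A : C => (⟨F.obj A, hZ A⟩ : ObjectProperty.FullSubcategory Z)) '' GC)))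
        (by rintro ⟨y, A, hA, rfl⟩; exact ⟨⟨A, hA⟩, rfl⟩)
    · rintro A ⟨A₀, hA₀, rfl⟩
      exact presTrans _ (hPresObj A₀ (hGCpres _ hA₀))
    · intro X
      obtain ⟨X₀, hX₀⟩ := X.2
      obtain ⟨J, instJ, K, c, hJfil, hKmem, ⟨hcolim⟩, ⟨e⟩⟩ := hGCgen X₀
      haveI := (hPres J hJfil).some
      refine ⟨J, instJ, ObjectProperty.lift Z (K ⋙ F) fun j => hZ (K.obj j),
        pushCocone F Z hZ K c, hJfil, fun j => ⟨K.obj j, hKmem j, rfl⟩,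
        ⟨pushCocone_isColimit F Z hZ K c hcolim⟩,
        ⟨(ObjectProperty.ι Z).preimageIso (F.mapIso e ≪≫ eqToIso hX₀)⟩⟩
end
end

section
/- Let E be a locally small category with colimits of small κ-filtered diagrams, let X, Y : I → E be small λ-filtered diagrams (κ ≤ λ) whose vertices are λ-presentable objects, let φ : X ⇒ Y be a natural transformation, and let i₀ be an object of I. If colim φ : colim X → colim Y is an isomorphism, then there exists a chain I' : κ → I with I'(0) = i₀ such that the induced morphism colim_{γ<κ} X(I'(γ)) → colim_{γ<κ} Y(I'(γ)) is an isomorphism. -/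
universe v u u₂

open CategoryTheory Limits Opposite

noncomputable section

section Aux

variable {E : Type u} [Category.{v} E] {I : Type v} [SmallCategory I]

lemma isFiltered_of_isCardFiltered_s11 {lam : Cardinal.{v}} (hlam : lam.IsRegular)
    (hI : IsCardFiltered I lam) : IsFiltered I := by
  apply IsFiltered.of_cocone_nonempty.{v}
  intro J _ _ F
  refine hI J ?_ F
  have : Finite (Σ p : J × J, p.1 ⟶ p.2) := by infer_instance
  exact lt_of_lt_of_le (Cardinal.lt_aleph0_of_finite _) hlam.aleph0_le

lemma cardSmallCat_of_preorder {K : Type v} [Preorder K] {lam : Cardinal.{v}}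
    (hlam : lam.IsRegular) (h : Cardinal.mk K < lam) : CardSmallCat K lam := by
  have hinj : Function.Injective (fun s : (Σ p : K × K, p.1 ⟶ p.2) => s.1) := by
    rintro ⟨p, f⟩ ⟨q, g⟩ hpq
    dsimp at hpq
    subst hpq
    rw [Subsingleton.elim f g]
  refine lt_of_le_of_lt (Cardinal.mk_le_of_injective hinj) ?_
  have : Cardinal.mk (K × K) = Cardinal.mk K * Cardinal.mk K := by
    simp [Cardinal.mk_prod]
  rw [this]
  exact Cardinal.mul_lt_of_lt hlam.aleph0_le h h

lemma pres_fac {lam : Cardinal.{v}} (hI : IsCardFiltered I lam)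
    {A : E} (hA : IsCardPresentable lam A) {D : I ⥤ E} {c : Cocone D} (hc : IsColimit c)
    (t : A ⟶ c.pt) : ∃ (i : I) (g : A ⟶ D.obj i), g ≫ c.ι.app i = t := by
  haveI := (hA I hI).some
  have hc' := isColimitOfPreserves (coyoneda.obj (op A)) hc
  obtain ⟨i, g, hg⟩ := Types.jointly_surjective (D ⋙ coyoneda.obj (op A)) hc' t
  exact ⟨i, g, hg⟩

lemma pres_eq {lam : Cardinal.{v}} (hlam : lam.IsRegular) (hI : IsCardFiltered I lam)
    {A : E} (hA : IsCardPresentable lam A) {D : I ⥤ E} {c : Cocone D} (hc : IsColimit c)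
    {i : I} (g₁ g₂ : A ⟶ D.obj i) (h : g₁ ≫ c.ι.app i = g₂ ≫ c.ι.app i) :
    ∃ (j : I) (u : i ⟶ j), g₁ ≫ D.map u = g₂ ≫ D.map u := by
  haveI : IsFiltered I := isFiltered_of_isCardFiltered_s11 hlam hI
  haveI := (hA I hI).some
  have hc' := isColimitOfPreserves (coyoneda.obj (op A)) hc
  have h' : ((coyoneda.obj (op A)).mapCocone c).ι.app i g₁ =
      ((coyoneda.obj (op A)).mapCocone c).ι.app i g₂ := h
  obtain ⟨k, f, f', hff'⟩ :=
    (Types.FilteredColimit.isColimit_eq_iff (D ⋙ coyoneda.obj (op A)) hc').mp h'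
  have hff'' : g₁ ≫ D.map f = g₂ ≫ D.map f' := hff'
  refine ⟨_, f ≫ IsFiltered.coeqHom f f', ?_⟩
  calc g₁ ≫ D.map (f ≫ IsFiltered.coeqHom f f')
      = (g₁ ≫ D.map f) ≫ D.map (IsFiltered.coeqHom f f') := by
        rw [D.map_comp, Category.assoc]
    _ = (g₂ ≫ D.map f') ≫ D.map (IsFiltered.coeqHom f f') := by rw [hff'']
    _ = g₂ ≫ D.map (f' ≫ IsFiltered.coeqHom f f') := by rw [D.map_comp, Category.assoc]
    _ = g₂ ≫ D.map (f ≫ IsFiltered.coeqHom f f') := by rw [← IsFiltered.coeq_condition]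

lemma step_exists {lam : Cardinal.{v}} (hlam : lam.IsRegular) (hI : IsCardFiltered I lam)
    (X Y : I ⥤ E)
    (hX : ∀ i, IsCardPresentable lam (X.obj i)) (hY : ∀ i, IsCardPresentable lam (Y.obj i))
    (φ : X ⟶ Y)
    (cX : Cocone X) (hcX : IsColimit cX) (cY : Cocone Y) (hcY : IsColimit cY)
    (hiso : IsIso (hcX.desc ((Cocone.precompose φ).obj cY))) (i : I) :
    ∃ (j : I) (u : i ⟶ j) (ψ : Y.obj i ⟶ X.obj j),
      φ.app i ≫ ψ = X.map u ∧ ψ ≫ φ.app j = Y.map u := by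
  haveI : IsFiltered I := isFiltered_of_isCardFiltered_s11 hlam hI
  set f := hcX.desc ((Cocone.precompose φ).obj cY) with hf
  have hfac : ∀ i, cX.ι.app i ≫ f = φ.app i ≫ cY.ι.app i := fun i => hcX.fac _ i
  set g := inv f with hg
  -- factor cY.ι.app i ≫ g through some X.obj j₁
  obtain ⟨j₁, ψ₁, hψ₁⟩ := pres_fac hI (hY i) hcX (cY.ι.app i ≫ g)
  -- bound i and j₁
  set k := IsFiltered.max i j₁ with hk
  set ψ₂ := ψ₁ ≫ X.map (IsFiltered.rightToMax i j₁) with hψ₂def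
  have hψ₂ : ψ₂ ≫ cX.ι.app k = cY.ι.app i ≫ g := by
    rw [hψ₂def, Category.assoc, cX.w]; exact hψ₁
  -- equalize φ.app i ≫ ψ₂ with X.map (leftToMax)
  have heq1 : (φ.app i ≫ ψ₂) ≫ cX.ι.app k = X.map (IsFiltered.leftToMax i j₁) ≫ cX.ι.app k := by
    rw [Category.assoc, hψ₂, ← Category.assoc, ← hfac, Category.assoc, IsIso.hom_inv_id,
      Category.comp_id, cX.w]
  obtain ⟨j₂, w, hw⟩ := pres_eq hlam hI (hX i) hcX _ _ heq1
  set u₁ := IsFiltered.leftToMax i j₁ ≫ w with hu₁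
  set ψ₃ := ψ₂ ≫ X.map w with hψ₃def
  have h1 : φ.app i ≫ ψ₃ = X.map u₁ := by
    rw [hψ₃def, ← Category.assoc, hw, hu₁, X.map_comp]
  have hψ₃ : ψ₃ ≫ cX.ι.app j₂ = cY.ι.app i ≫ g := by
    rw [hψ₃def, Category.assoc, cX.w]; exact hψ₂
  -- equalize ψ₃ ≫ φ.app j₂ with Y.map u₁
  have heq2 : (ψ₃ ≫ φ.app j₂) ≫ cY.ι.app j₂ = Y.map u₁ ≫ cY.ι.app j₂ := by
    rw [Category.assoc, ← hfac, ← Category.assoc, hψ₃, Category.assoc, IsIso.inv_hom_id,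
      Category.comp_id, cY.w]
  obtain ⟨j₃, w', hw'⟩ := pres_eq hlam hI (hY i) hcY _ _ heq2
  refine ⟨j₃, u₁ ≫ w', ψ₃ ≫ X.map w', ?_, ?_⟩
  · rw [← Category.assoc, h1, ← X.map_comp]
  · rw [Category.assoc, φ.naturality w', ← Category.assoc, hw', ← Y.map_comp]

end Aux

section ToType

open Cardinal Ordinal

lemma noMaxOrder_toType {κ : Cardinal.{v}} (hκ : κ.IsRegular) : NoMaxOrder κ.ord.ToType := by
  constructor
  intro a
  set e := Ordinal.ToType.mk (o := κ.ord) with he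
  refine ⟨e ⟨Order.succ (e.symm a).1, Set.mem_Iio.mpr ((Cardinal.isSuccLimit_ord hκ.aleph0_le).succ_lt (Set.mem_Iio.mp (e.symm a).2))⟩, ?_⟩
  have h1 : e.symm a < ⟨Order.succ (e.symm a).1,
      Set.mem_Iio.mpr ((Cardinal.isSuccLimit_ord hκ.aleph0_le).succ_lt (Set.mem_Iio.mp (e.symm a).2))⟩ := by
    rw [Subtype.mk_lt_mk]
    exact Order.lt_succ _
  have := e.lt_iff_lt.mpr h1
  rwa [OrderIso.apply_symm_apply] at this

lemma isCardFiltered_toType {κ : Cardinal.{v}} (hκ : κ.IsRegular) :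
    IsCardFiltered κ.ord.ToType κ := by
  intro K _ hK F
  have hKcard : Cardinal.mk K < κ := by
    refine lt_of_le_of_lt (Cardinal.mk_le_of_injective
      (f := fun k : K => (⟨(k, k), 𝟙 k⟩ : Σ p : K × K, p.1 ⟶ p.2)) ?_) hK
    intro a b hab
    exact congrArg (fun s => s.1.1) hab
  set e := Ordinal.ToType.mk (o := κ.ord) with he
  have hlsub : Ordinal.lsub (fun k : K => (e.symm (F.obj k)).1) < κ.ord := by
    refine Ordinal.lsub_lt_ord ?_ (fun k => Set.mem_Iio.mp (e.symm (F.obj k)).2)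
    rwa [hκ.cof_eq]
  refine ⟨⟨e ⟨_, Set.mem_Iio.mpr hlsub⟩, ⟨fun k => homOfLE ?_, fun _ _ _ => Subsingleton.elim _ _⟩⟩⟩
  have h1 : e.symm (F.obj k) ≤ ⟨_, Set.mem_Iio.mpr hlsub⟩ := le_of_lt (by
    rw [Subtype.mk_lt_mk]
    exact Ordinal.lt_lsub _ k)
  have := e.le_iff_le.mpr h1
  rwa [OrderIso.apply_symm_apply] at this

end ToType

section Chain

variable {E : Type u} [Category.{v} E] {I : Type v} [SmallCategory I]
variable {O : Type v} [LinearOrder O] [OrderBot O] [SuccOrder O] [NoMaxOrder O]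

variable (X Y : I ⥤ E) (φ : X ⟶ Y) (i₀ : I) (O) in
/-- A partial chain in `I` defined on a lower subset of `O`, equipped with back-and-forth
data `ψ` at successor steps. -/
structure PC : Type (max u v) where
  dom : Set O
  lower : IsLowerSet dom
  o : O → I
  o_bot : o ⊥ = i₀
  m : ∀ γ₁ γ₂ : O, γ₁ ≤ γ₂ → γ₂ ∈ dom → (o γ₁ ⟶ o γ₂)
  m_refl : ∀ (γ) (h : γ ∈ dom), m γ γ le_rfl h = 𝟙 (o γ)
  m_comp : ∀ (γ₁ γ₂ γ₃) (h₁ : γ₁ ≤ γ₂) (h₂ : γ₂ ≤ γ₃) (h₃ : γ₃ ∈ dom),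
    m γ₁ γ₂ h₁ (lower h₂ h₃) ≫ m γ₂ γ₃ h₂ h₃ = m γ₁ γ₃ (h₁.trans h₂) h₃
  ψ : ∀ γ : O, Order.succ γ ∈ dom → (Y.obj (o γ) ⟶ X.obj (o (Order.succ γ)))
  hψ₁ : ∀ (γ) (h : Order.succ γ ∈ dom),
    φ.app (o γ) ≫ ψ γ h = X.map (m γ (Order.succ γ) (Order.le_succ γ) h)
  hψ₂ : ∀ (γ) (h : Order.succ γ ∈ dom),
    ψ γ h ≫ φ.app (o (Order.succ γ)) = Y.map (m γ (Order.succ γ) (Order.le_succ γ) h)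

namespace PC

variable {X Y : I ⥤ E} {φ : X ⟶ Y} {i₀ : I}

/-- Helper: reassociated version of `m_comp`. -/
lemma m_comp_assoc (d : PC O X Y φ i₀) {γ₁ γ₂ γ₃ : O} (h₁ : γ₁ ≤ γ₂) (h₂ : γ₂ ≤ γ₃)
    (h₃ : γ₃ ∈ d.dom) {Z : I} (g : d.o γ₃ ⟶ Z) :
    d.m γ₁ γ₂ h₁ (d.lower h₂ h₃) ≫ d.m γ₂ γ₃ h₂ h₃ ≫ g = d.m γ₁ γ₃ (h₁.trans h₂) h₃ ≫ g := by
  rw [← Category.assoc, d.m_comp]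

/-- The extension (pre)order on partial chains. -/
protected def LE (d e : PC O X Y φ i₀) : Prop :=
  d.dom ⊆ e.dom ∧
  (∀ γ ∈ d.dom, e.o γ = d.o γ) ∧
  (∀ (γ₁ γ₂ : O) (h₁ : γ₁ ≤ γ₂) (h₂ : γ₂ ∈ d.dom) (h₂' : γ₂ ∈ e.dom)
      (p₁ : e.o γ₁ = d.o γ₁) (p₂ : d.o γ₂ = e.o γ₂),
      e.m γ₁ γ₂ h₁ h₂' = eqToHom p₁ ≫ d.m γ₁ γ₂ h₁ h₂ ≫ eqToHom p₂) ∧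
  (∀ (γ : O) (h : Order.succ γ ∈ d.dom) (h' : Order.succ γ ∈ e.dom)
      (p₁ : e.o γ = d.o γ) (p₂ : d.o (Order.succ γ) = e.o (Order.succ γ)),
      e.ψ γ h' = Y.map (eqToHom p₁) ≫ d.ψ γ h ≫ X.map (eqToHom p₂))

instance : Preorder (PC O X Y φ i₀) where
  le := PC.LE
  le_refl d := by
    refine ⟨le_refl _, fun _ _ => rfl, fun γ₁ γ₂ h₁ h₂ h₂' p₁ p₂ => ?_, fun γ h h' p₁ p₂ => ?_⟩
    · simp
    · simp
  le_trans d e f hde hef := by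
    obtain ⟨hde1, hde2, hde3, hde4⟩ := hde
    obtain ⟨hef1, hef2, hef3, hef4⟩ := hef
    refine ⟨hde1.trans hef1, fun γ hγ => (hef2 γ (hde1 hγ)).trans (hde2 γ hγ),
      fun γ₁ γ₂ h₁ h₂ h₂' p₁ p₂ => ?_, fun γ h h' p₁ p₂ => ?_⟩
    · rw [hef3 γ₁ γ₂ h₁ (hde1 h₂) h₂' (hef2 γ₁ (hde1 (d.lower h₁ h₂)))
        (hef2 γ₂ (hde1 h₂)).symm,
        hde3 γ₁ γ₂ h₁ h₂ (hde1 h₂) (hde2 γ₁ (d.lower h₁ h₂)) (hde2 γ₂ h₂).symm]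
      simp
    · rw [hef4 γ (hde1 h) h' (hef2 _ (hde1 (d.lower (Order.le_succ γ) h)))
        (hef2 _ (hde1 h)).symm,
        hde4 γ h (hde1 h) (hde2 _ (d.lower (Order.le_succ γ) h)) (hde2 _ h).symm]
      simp [eqToHom_map]

section Union

variable (C : Set (PC O X Y φ i₀)) (hC : IsChain (· ≤ ·) C)

include hC

lemma agree_o {c d : PC O X Y φ i₀} (hc : c ∈ C) (hd : d ∈ C) {γ : O}
    (h1 : γ ∈ c.dom) (h2 : γ ∈ d.dom) : c.o γ = d.o γ := by
  rcases eq_or_ne c d with rfl | hne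
  · rfl
  rcases hC hc hd hne with h | h
  · exact (h.2.1 γ h1).symm
  · exact h.2.1 γ h2

lemma agree_m {c d : PC O X Y φ i₀} (hc : c ∈ C) (hd : d ∈ C) {γ₁ γ₂ : O} (h₁ : γ₁ ≤ γ₂)
    (m1 : γ₂ ∈ c.dom) (m2 : γ₂ ∈ d.dom) (p₁ : c.o γ₁ = d.o γ₁) (p₂ : d.o γ₂ = c.o γ₂) :
    c.m γ₁ γ₂ h₁ m1 = eqToHom p₁ ≫ d.m γ₁ γ₂ h₁ m2 ≫ eqToHom p₂ := by
  rcases eq_or_ne c d with rfl | hne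
  · simp
  rcases hC hc hd hne with h | h
  · rw [h.2.2.1 γ₁ γ₂ h₁ m1 m2 (h.2.1 γ₁ (c.lower h₁ m1)) (h.2.1 γ₂ m1).symm]
    simp
  · rw [h.2.2.1 γ₁ γ₂ h₁ m2 m1 (h.2.1 γ₁ (d.lower h₁ m2)) (h.2.1 γ₂ m2).symm]
    try simp
  
lemma agree_ψ {c d : PC O X Y φ i₀} (hc : c ∈ C) (hd : d ∈ C) {γ : O}
    (m1 : Order.succ γ ∈ c.dom) (m2 : Order.succ γ ∈ d.dom)
    (p₁ : c.o γ = d.o γ) (p₂ : d.o (Order.succ γ) = c.o (Order.succ γ)) :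
    c.ψ γ m1 = Y.map (eqToHom p₁) ≫ d.ψ γ m2 ≫ X.map (eqToHom p₂) := by
  rcases eq_or_ne c d with rfl | hne
  · simp
  rcases hC hc hd hne with h | h
  · rw [h.2.2.2 γ m1 m2 (h.2.1 γ (c.lower (Order.le_succ γ) m1)) (h.2.1 _ m1).symm]
    simp [eqToHom_map]
  · rw [h.2.2.2 γ m2 m1 (h.2.1 γ (d.lower (Order.le_succ γ) m2)) (h.2.1 _ m2).symm]
    try simp [eqToHom_map]

omit hC in
/-- The underlying object function of the union of a chain of partial chains. -/
def uO : O → I := fun γ =>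
  letI := Classical.dec (∃ c : PC O X Y φ i₀, c ∈ C ∧ γ ∈ c.dom)
  if h : ∃ c : PC O X Y φ i₀, c ∈ C ∧ γ ∈ c.dom then h.choose.o γ else i₀

omit hC in
lemma uO_def (γ : O) :
    uO C γ =
      (letI := Classical.dec (∃ c : PC O X Y φ i₀, c ∈ C ∧ γ ∈ c.dom)
      if h : ∃ c : PC O X Y φ i₀, c ∈ C ∧ γ ∈ c.dom then h.choose.o γ else i₀) := rfl

lemma uO_eq {c : PC O X Y φ i₀} (hc : c ∈ C) {γ : O} (hγ : γ ∈ c.dom) :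
    uO C γ = c.o γ := by
  have h : ∃ c : PC O X Y φ i₀, c ∈ C ∧ γ ∈ c.dom := ⟨c, hc, hγ⟩
  rw [uO_def, dif_pos h]
  exact agree_o C hC h.choose_spec.1 hc h.choose_spec.2 hγ

/-- The union of a chain of partial chains. -/
def union : PC O X Y φ i₀ where
  dom := {γ | ∃ c : PC O X Y φ i₀, c ∈ C ∧ γ ∈ c.dom}
  lower := fun a b hba ha => by
    obtain ⟨c, hc, hac⟩ := ha
    exact ⟨c, hc, c.lower hba hac⟩
  o := uO C
  o_bot := by
    by_cases h : ∃ c : PC O X Y φ i₀, c ∈ C ∧ (⊥ : O) ∈ c.dom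
    · rw [uO_def, dif_pos h]; exact h.choose.o_bot
    · rw [uO_def, dif_neg h]
  m γ₁ γ₂ h₁ h₂ :=
    eqToHom (uO_eq C hC h₂.choose_spec.1 (h₂.choose.lower h₁ h₂.choose_spec.2)) ≫
      h₂.choose.m γ₁ γ₂ h₁ h₂.choose_spec.2 ≫
      eqToHom (uO_eq C hC h₂.choose_spec.1 h₂.choose_spec.2).symm
  m_refl := fun γ h => by
    rw [h.choose.m_refl γ h.choose_spec.2]
    simp
  m_comp := fun γ₁ γ₂ γ₃ h₁ h₂ h₃ => by
    have hd3 := h₃.choose_spec.1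
    have hm3 := h₃.choose_spec.2
    have hm2 : γ₂ ∈ h₃.choose.dom := h₃.choose.lower h₂ hm3
    -- rewrite the (γ₁,γ₂)-component in terms of h₃.choose
    have h2dom : (γ₂ : O) ∈ {γ | ∃ c : PC O X Y φ i₀, c ∈ C ∧ γ ∈ c.dom} := ⟨_, hd3, hm2⟩
    rw [agree_m C hC h2dom.choose_spec.1 hd3 h₁ h2dom.choose_spec.2 hm2
      (agree_o C hC h2dom.choose_spec.1 hd3 (h2dom.choose.lower h₁ h2dom.choose_spec.2)
        (h₃.choose.lower h₁ hm2))
      (agree_o C hC hd3 h2dom.choose_spec.1 hm2 h2dom.choose_spec.2)]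
    simp only [Category.assoc, eqToHom_trans, eqToHom_trans_assoc, eqToHom_refl,
      Category.id_comp, Category.comp_id]
    rw [m_comp_assoc]
  ψ γ h :=
    Y.map (eqToHom (uO_eq C hC h.choose_spec.1 (h.choose.lower (Order.le_succ γ) h.choose_spec.2))) ≫
      h.choose.ψ γ h.choose_spec.2 ≫
      X.map (eqToHom (uO_eq C hC h.choose_spec.1 h.choose_spec.2).symm)
  hψ₁ := fun γ h => by
    have p := uO_eq C hC h.choose_spec.1 (h.choose.lower (Order.le_succ γ) h.choose_spec.2)
    rw [← Category.assoc, ← φ.naturality (eqToHom p), Category.assoc,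
      reassoc_of% (h.choose.hψ₁ γ h.choose_spec.2)]
    rw [← X.map_comp, ← X.map_comp]
  hψ₂ := fun γ h => by
    have q := (uO_eq C hC h.choose_spec.1 h.choose_spec.2).symm
    rw [Category.assoc, Category.assoc, φ.naturality (eqToHom q),
      reassoc_of% (h.choose.hψ₂ γ h.choose_spec.2)]
    rw [← Y.map_comp, ← Y.map_comp]

lemma le_union {c : PC O X Y φ i₀} (hc : c ∈ C) : c ≤ union C hC := by
  refine ⟨fun γ hγ => ⟨c, hc, hγ⟩, fun γ hγ => uO_eq C hC hc hγ,
    fun γ₁ γ₂ h₁ h₂ h₂' p₁ p₂ => ?_, fun γ h h' p₁ p₂ => ?_⟩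
  · show eqToHom _ ≫ h₂'.choose.m γ₁ γ₂ h₁ h₂'.choose_spec.2 ≫ eqToHom _ = _
    rw [agree_m C hC h₂'.choose_spec.1 hc h₁ h₂'.choose_spec.2 h₂
      (agree_o C hC h₂'.choose_spec.1 hc (h₂'.choose.lower h₁ h₂'.choose_spec.2) (c.lower h₁ h₂))
      (agree_o C hC hc h₂'.choose_spec.1 h₂ h₂'.choose_spec.2)]
    simp
    rfl
  · show Y.map (eqToHom _) ≫ h'.choose.ψ γ h'.choose_spec.2 ≫ X.map (eqToHom _) = _
    rw [agree_ψ C hC h'.choose_spec.1 hc h'.choose_spec.2 h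
      (agree_o C hC h'.choose_spec.1 hc (h'.choose.lower (Order.le_succ γ) h'.choose_spec.2)
        (c.lower (Order.le_succ γ) h))
      (agree_o C hC hc h'.choose_spec.1 h h'.choose_spec.2)]
    simp [← Functor.map_comp, ← Functor.map_comp_assoc, eqToHom_trans]
    rfl

end Union

end PC

end Chain

section Extend

variable {E : Type u} [Category.{v} E] {I : Type v} [SmallCategory I]
variable {O : Type v} [LinearOrder O] [OrderBot O] [SuccOrder O] [NoMaxOrder O]
variable {X Y : I ⥤ E} {φ : X ⟶ Y} {i₀ : I}

namespace PC

variable (d : PC O X Y φ i₀) (β : O) (hd : d.dom = Set.Iio β) (p : I)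
  (hp : β = ⊥ → p = i₀)
  (leg : ∀ γ : O, γ < β → (d.o γ ⟶ p))
  (hleg : ∀ (γ₁ γ₂ : O) (h₁ : γ₁ ≤ γ₂) (h₂ : γ₂ < β),
    d.m γ₁ γ₂ h₁ (by rw [hd]; exact h₂) ≫ leg γ₂ h₂ = leg γ₁ (h₁.trans_lt h₂))
  (nψ : ∀ γ : O, Order.succ γ = β → (Y.obj (d.o γ) ⟶ X.obj p))
  (hnψ₁ : ∀ (γ : O) (h : Order.succ γ = β),
    φ.app (d.o γ) ≫ nψ γ h = X.map (leg γ (h ▸ Order.lt_succ γ)))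
  (hnψ₂ : ∀ (γ : O) (h : Order.succ γ = β),
    nψ γ h ≫ φ.app p = Y.map (leg γ (h ▸ Order.lt_succ γ)))

include hd hp hleg hnψ₁ hnψ₂ in
/-- Extending a partial chain defined on `Iio β` to `Iic β`. -/
def topExtend : PC O X Y φ i₀ where
  dom := Set.Iic β
  lower := fun _ _ hba ha => le_trans hba ha
  o γ := if γ = β then p else d.o γ
  o_bot := by
    by_cases h : (⊥ : O) = β
    · rw [if_pos h]; exact hp h.symm
    · rw [if_neg h]; exact d.o_bot
  m γ₁ γ₂ h₁ h₂ :=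
    if e₂ : γ₂ = β then
      if e₁ : γ₁ = β then eqToHom (by rw [e₁, e₂])
      else
        eqToHom (if_neg e₁) ≫ leg γ₁ (lt_of_le_of_ne (h₁.trans h₂) e₁) ≫
          eqToHom (if_pos e₂).symm
    else
      eqToHom (if_neg (ne_of_lt (h₁.trans_lt (lt_of_le_of_ne h₂ e₂)))) ≫
        d.m γ₁ γ₂ h₁ (by rw [hd]; exact lt_of_le_of_ne h₂ e₂) ≫
        eqToHom (if_neg e₂).symm
  m_refl := fun γ h => by
    by_cases e : γ = β
    · rw [dif_pos e, dif_pos e]; simp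
    · rw [dif_neg e, d.m_refl]; simp
  m_comp := fun γ₁ γ₂ γ₃ h₁ h₂ h₃ => by
    by_cases e₃ : γ₃ = β
    · by_cases e₂ : γ₂ = β
      · rw [dif_pos e₂, dif_pos e₃, dif_pos e₃, dif_pos e₂]
        by_cases e₁ : γ₁ = β
        · rw [dif_pos e₁, dif_pos e₁]
          simp
        · rw [dif_neg e₁, dif_neg e₁]
          simp
      · have e₁ : γ₁ ≠ β := ne_of_lt (h₁.trans_lt (lt_of_le_of_ne (h₂.trans h₃) e₂))
        rw [dif_neg e₂, dif_pos e₃, dif_pos e₃, dif_neg e₂, dif_neg e₁]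
        simp only [Category.assoc, eqToHom_trans_assoc, eqToHom_refl, Category.id_comp]
        rw [reassoc_of% (hleg γ₁ γ₂ h₁ (lt_of_le_of_ne (h₂.trans h₃) e₂))]
    · have e₂ : γ₂ ≠ β := ne_of_lt (h₂.trans_lt (lt_of_le_of_ne h₃ e₃))
      have e₁ : γ₁ ≠ β := ne_of_lt ((h₁.trans h₂).trans_lt (lt_of_le_of_ne h₃ e₃))
      rw [dif_neg e₃, dif_neg e₃, dif_neg e₂]
      simp only [Category.assoc, eqToHom_trans_assoc, eqToHom_refl, Category.id_comp]
      rw [d.m_comp_assoc]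
  ψ γ h :=
    if e : Order.succ γ = β then
      Y.map (eqToHom (if_neg (ne_of_lt ((Order.lt_succ γ).trans_le h)))) ≫ nψ γ e ≫
        X.map (eqToHom (if_pos e).symm)
    else
      Y.map (eqToHom (if_neg (ne_of_lt ((Order.lt_succ γ).trans_le h)))) ≫
        d.ψ γ (by rw [hd]; exact lt_of_le_of_ne h e) ≫
        X.map (eqToHom (if_neg e).symm)
  hψ₁ := fun γ h => by
    by_cases e : Order.succ γ = β
    · rw [dif_pos e, dif_pos e, dif_neg (ne_of_lt ((Order.lt_succ γ).trans_le h))]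
      rw [← Category.assoc,
        ← φ.naturality (eqToHom (if_neg (ne_of_lt ((Order.lt_succ γ).trans_le h)))),
        Category.assoc, reassoc_of% (hnψ₁ γ e)]
      simp only [Category.assoc, ← Functor.map_comp]
    · rw [dif_neg e, dif_neg e]
      rw [← Category.assoc,
        ← φ.naturality (eqToHom (if_neg (ne_of_lt ((Order.lt_succ γ).trans_le h)))),
        Category.assoc, reassoc_of% (d.hψ₁ γ (by rw [hd]; exact lt_of_le_of_ne h e))]
      simp only [Category.assoc, ← Functor.map_comp]
  hψ₂ := fun γ h => by
    by_cases e : Order.succ γ = β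
    · rw [dif_pos e, dif_pos e, dif_neg (ne_of_lt ((Order.lt_succ γ).trans_le h))]
      rw [Category.assoc, Category.assoc, φ.naturality (eqToHom (if_pos e).symm),
        reassoc_of% (hnψ₂ γ e)]
      simp only [Category.assoc, ← Functor.map_comp]
    · rw [dif_neg e, dif_neg e]
      rw [Category.assoc, Category.assoc, φ.naturality (eqToHom (if_neg e).symm),
        reassoc_of% (d.hψ₂ γ (by rw [hd]; exact lt_of_le_of_ne h e))]
      simp only [Category.assoc, ← Functor.map_comp]

lemma le_topExtend : d ≤ topExtend d β hd p hp leg hleg nψ hnψ₁ hnψ₂ := by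
  have hsub : d.dom ⊆ Set.Iic β := by rw [hd]; exact fun γ hγ => le_of_lt hγ
  have ho : ∀ γ ∈ d.dom, (topExtend d β hd p hp leg hleg nψ hnψ₁ hnψ₂).o γ = d.o γ := by
    intro γ hγ
    have : γ ≠ β := by rw [hd] at hγ; exact ne_of_lt hγ
    exact if_neg this
  refine ⟨hsub, ho, fun γ₁ γ₂ h₁ h₂ h₂' p₁ p₂ => ?_, fun γ h h' p₁ p₂ => ?_⟩
  · have e₂ : γ₂ ≠ β := by rw [hd] at h₂; exact ne_of_lt h₂
    have : (topExtend d β hd p hp leg hleg nψ hnψ₁ hnψ₂).m γ₁ γ₂ h₁ h₂' =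
        eqToHom (if_neg (ne_of_lt (h₁.trans_lt (lt_of_le_of_ne h₂' e₂)))) ≫
          d.m γ₁ γ₂ h₁ (by rw [hd]; exact lt_of_le_of_ne h₂' e₂) ≫
          eqToHom (if_neg e₂).symm := by
      show (if e₂' : γ₂ = β then _ else _) = _
      exact dif_neg e₂
    rw [this]
    rfl
  · have e : Order.succ γ ≠ β := by rw [hd] at h; exact ne_of_lt h
    have : (topExtend d β hd p hp leg hleg nψ hnψ₁ hnψ₂).ψ γ h' =
        Y.map (eqToHom (if_neg (ne_of_lt ((Order.lt_succ γ).trans_le h')))) ≫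
          d.ψ γ (by rw [hd]; exact lt_of_le_of_ne h' e) ≫
          X.map (eqToHom (if_neg e).symm) := by
      show (if e' : Order.succ γ = β then _ else _) = _
      exact dif_neg e
    rw [this]
    rfl

lemma topExtend_mem : β ∈ (topExtend d β hd p hp leg hleg nψ hnψ₁ hnψ₂).dom := le_refl β

include hd in
lemma not_mem_self : β ∉ d.dom := by rw [hd]; exact lt_irrefl β

end PC

end Extend

section Full

variable {E : Type u} [Category.{v} E] {I : Type v} [SmallCategory I]
variable {O : Type v} [LinearOrder O] [OrderBot O] [SuccOrder O] [NoMaxOrder O]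
variable {X Y : I ⥤ E} {φ : X ⟶ Y} {i₀ : I}

namespace PC

/-- The empty partial chain. -/
def base (O : Type v) [LinearOrder O] [OrderBot O] [SuccOrder O] [NoMaxOrder O]
    (X Y : I ⥤ E) (φ : X ⟶ Y) (i₀ : I) : PC O X Y φ i₀ where
  dom := ∅
  lower := fun _ _ _ h => h.elim
  o := fun _ => i₀
  o_bot := rfl
  m := fun _ _ _ h => h.elim
  m_refl := fun _ h => h.elim
  m_comp := fun _ _ _ _ _ h => h.elim
  ψ := fun _ h => h.elim
  hψ₁ := fun _ h => h.elim
  hψ₂ := fun _ h => h.elim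

/-- A partial chain with full domain determines a functor `O ⥤ I`. -/
def toFunctor (d : PC O X Y φ i₀) (hfull : ∀ γ : O, γ ∈ d.dom) : O ⥤ I where
  obj := d.o
  map {γ₁ γ₂} f := d.m γ₁ γ₂ (leOfHom f) (hfull γ₂)
  map_id γ := d.m_refl γ (hfull γ)
  map_comp {γ₁ γ₂ γ₃} f g := (d.m_comp γ₁ γ₂ γ₃ (leOfHom f) (leOfHom g) (hfull γ₃)).symm

end PC

end Full

/-- Back-and-forth approximation of isomorphisms along a chain of length `κ`. -/
theorem stmt11 {E : Type u} [Category.{v} E] (κ lam : Cardinal.{v})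
    (hκ : κ.IsRegular) (hlam : lam.IsRegular) (hkl : κ ≤ lam)
    (hcolim : ∀ (J : Type v) [SmallCategory J], IsCardFiltered J κ → HasColimitsOfShape J E)
    {I : Type v} [SmallCategory I] (hI : IsCardFiltered I lam)
    (X Y : I ⥤ E)
    (hX : ∀ i, IsCardPresentable lam (X.obj i)) (hY : ∀ i, IsCardPresentable lam (Y.obj i))
    (φ : X ⟶ Y) (i₀ : I)
    (cX : Cocone X) (hcX : IsColimit cX) (cY : Cocone Y) (hcY : IsColimit cY)
    (hiso : IsIso (hcX.desc ((Cocone.precompose φ).obj cY))) :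
    ∃ (I' : κ.ord.ToType ⥤ I) (z : κ.ord.ToType), (∀ x, z ≤ x) ∧ I'.obj z = i₀ ∧
      ∃ (cX' : Cocone (I' ⋙ X)) (hX' : IsColimit cX') (cY' : Cocone (I' ⋙ Y))
        (hY' : IsColimit cY'),
        IsIso (hX'.desc ((Cocone.precompose (Functor.whiskerLeft I' φ)).obj cY')) := by
  classical
  letI : OrderBot κ.ord.ToType := Ordinal.toTypeOrderBot (ne_of_gt (by
    rw [Cardinal.lt_ord]; simpa using hκ.pos))
  letI : SuccOrder κ.ord.ToType := SuccOrder.ofLinearWellFoundedLT κ.ord.ToType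
  haveI : NoMaxOrder κ.ord.ToType := noMaxOrder_toType hκ
  haveI hfiltI : IsFiltered I := isFiltered_of_isCardFiltered_s11 hlam hI
  -- step data from the back-and-forth lemma
  choose stepJ stepU stepPsi hstep₁ hstep₂ using
    step_exists hlam hI X Y hX hY φ cX hcX cY hcY hiso
  -- Zorn's lemma
  obtain ⟨d, hdmax⟩ := zorn_le (α := PC κ.ord.ToType X Y φ i₀)
    (fun C hC => ⟨PC.union C hC, fun c hc => PC.le_union C hC hc⟩)
  -- the maximal partial chain has full domain
  have hfull : ∀ γ : κ.ord.ToType, γ ∈ d.dom := by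
    by_contra hne
    push_neg at hne
    obtain ⟨β₀, hβ₀⟩ := hne
    obtain ⟨β, hβ, hmin⟩ := (wellFounded_lt (α := κ.ord.ToType)).has_min
      {γ | γ ∉ d.dom} ⟨β₀, hβ₀⟩
    have hd : d.dom = Set.Iio β := by
      ext γ
      constructor
      · intro hγ
        by_contra hlt
        have hlt' : β ≤ γ := not_lt.mp (by simpa using hlt)
        exact hβ (d.lower hlt' hγ)
      · intro hγ
        by_contra hmem
        exact hmin γ hmem hγ
    have hext : ∃ e : PC κ.ord.ToType X Y φ i₀, d ≤ e ∧ β ∈ e.dom := by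
      by_cases hb : β = ⊥
      · -- base case: extension by the one-point chain at i₀
        have hsuccne : ∀ γ : κ.ord.ToType, Order.succ γ ≠ β := fun γ h =>
          (ne_of_gt (bot_le.trans_lt (Order.lt_succ γ))) (hb ▸ h)
        have hltne : ∀ γ : κ.ord.ToType, ¬ γ < β := fun γ h =>
          not_lt_bot (hb ▸ h)
        refine ⟨PC.topExtend d β hd i₀ (fun _ => rfl)
          (fun γ hγ => (hltne γ hγ).elim)
          (fun γ₁ γ₂ h₁ h₂ => (hltne γ₂ h₂).elim)
          (fun γ h => (hsuccne γ h).elim)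
          (fun γ h => (hsuccne γ h).elim)
          (fun γ h => (hsuccne γ h).elim), PC.le_topExtend _ _ _ _ _ _ _ _ _ _,
          PC.topExtend_mem _ _ _ _ _ _ _ _ _ _⟩
      · by_cases hs : ∃ α, Order.succ α = β
        · -- successor case: extension by the chosen step data
          obtain ⟨α, hα⟩ := hs
          have hαmem : α ∈ d.dom := by rw [hd]; exact hα ▸ Order.lt_succ α
          refine ⟨PC.topExtend d β hd (stepJ (d.o α)) (fun h => absurd h hb)
            (fun γ hγ =>
              d.m γ α (Order.le_of_lt_succ (hα ▸ hγ)) hαmem ≫ stepU (d.o α))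
            (fun γ₁ γ₂ h₁ h₂ => by rw [d.m_comp_assoc])
            (fun γ h =>
              Y.map (eqToHom (congrArg d.o (Order.succ_injective (h.trans hα.symm)))) ≫
                stepPsi (d.o α))
            (fun γ h => ?_) (fun γ h => ?_), PC.le_topExtend _ _ _ _ _ _ _ _ _ _,
            PC.topExtend_mem _ _ _ _ _ _ _ _ _ _⟩
          · have hγα : γ = α := Order.succ_injective (h.trans hα.symm)
            subst hγα
            rw [← Category.assoc, ← φ.naturality, Category.assoc, hstep₁, d.m_refl]
            simp
          · have hγα : γ = α := Order.succ_injective (h.trans hα.symm)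
            subst hγα
            rw [Category.assoc, hstep₂, d.m_refl]
            simp
        · -- limit case: extension by a cocone over the restriction
          have hcard : CardSmallCat (↥(Set.Iio β)) lam :=
            cardSmallCat_of_preorder hlam
              (lt_of_lt_of_le (Cardinal.mk_Iio_toType_ord_lt β) hkl)
          let Fres : ↥(Set.Iio β) ⥤ I :=
            { obj := fun x => d.o x.1
              map := fun {x y} f => d.m x.1 y.1 (leOfHom f) (by rw [hd]; exact y.2)
              map_id := fun x => d.m_refl x.1 _
              map_comp := fun {x y z} f g =>
                (d.m_comp x.1 y.1 z.1 (leOfHom f) (leOfHom g) _).symm }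
          obtain ⟨c⟩ := hI (↥(Set.Iio β)) hcard Fres
          refine ⟨PC.topExtend d β hd c.pt (fun h => absurd h hb)
            (fun γ hγ => c.ι.app ⟨γ, hγ⟩)
            (fun γ₁ γ₂ h₁ h₂ =>
              c.w (homOfLE (show (⟨γ₁, h₁.trans_lt h₂⟩ : ↥(Set.Iio β)) ≤ ⟨γ₂, h₂⟩ from h₁)))
            (fun γ h => absurd ⟨γ, h⟩ hs)
            (fun γ h => absurd ⟨γ, h⟩ hs)
            (fun γ h => absurd ⟨γ, h⟩ hs), PC.le_topExtend _ _ _ _ _ _ _ _ _ _,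
            PC.topExtend_mem _ _ _ _ _ _ _ _ _ _⟩
    obtain ⟨e, hde, hβe⟩ := hext
    exact hβ ((hdmax hde).1 hβe)
  -- the functor and the colimits
  set I' := d.toFunctor hfull with hI'
  haveI : HasColimitsOfShape κ.ord.ToType E := hcolim _ (isCardFiltered_toType hκ)
  set cX' := colimit.cocone (I' ⋙ X) with hcX'
  set hX' := colimit.isColimit (I' ⋙ X) with hhX'
  set cY' := colimit.cocone (I' ⋙ Y) with hcY'
  set hY' := colimit.isColimit (I' ⋙ Y) with hhY'
  refine ⟨I', ⊥, fun x => bot_le, d.o_bot, cX', hX', cY', hY', ?_⟩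
  -- the key compatibility
  have key : ∀ (a b : κ.ord.ToType) (hab : a ≤ b),
      Y.map (d.m a b hab (hfull b)) ≫ d.ψ b (hfull _) =
      d.ψ a (hfull _) ≫
        X.map (d.m (Order.succ a) (Order.succ b) (Order.succ_le_succ hab) (hfull _)) := by
    intro a b hab
    rcases eq_or_lt_of_le hab with rfl | hlt
    · rw [d.m_refl, d.m_refl]
      simp
    · have hsb : Order.succ a ≤ b := Order.succ_le_of_lt hlt
      calc Y.map (d.m a b hab (hfull b)) ≫ d.ψ b (hfull _)
          = Y.map (d.m a (Order.succ a) (Order.le_succ a) (hfull _)) ≫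
              Y.map (d.m (Order.succ a) b hsb (hfull b)) ≫ d.ψ b (hfull _) := by
            rw [← Category.assoc, ← Y.map_comp, d.m_comp]
        _ = d.ψ a (hfull _) ≫ φ.app (d.o (Order.succ a)) ≫
              Y.map (d.m (Order.succ a) b hsb (hfull b)) ≫ d.ψ b (hfull _) := by
            rw [reassoc_of% (d.hψ₂ a (hfull _))]
        _ = d.ψ a (hfull _) ≫ X.map (d.m (Order.succ a) b hsb (hfull b)) ≫
              φ.app (d.o b) ≫ d.ψ b (hfull _) := by
            rw [← reassoc_of% (φ.naturality (d.m (Order.succ a) b hsb (hfull b)))]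
        _ = d.ψ a (hfull _) ≫ X.map (d.m (Order.succ a) b hsb (hfull b)) ≫
              X.map (d.m b (Order.succ b) (Order.le_succ b) (hfull _)) := by
            rw [d.hψ₁ b (hfull _)]
        _ = d.ψ a (hfull _) ≫
              X.map (d.m (Order.succ a) (Order.succ b) (Order.succ_le_succ hab) (hfull _)) := by
            rw [← X.map_comp, d.m_comp]
  -- the inverse cocone
  let cc : Cocone (I' ⋙ Y) :=
    { pt := cX'.pt
      ι :=
        { app := fun a => d.ψ a (hfull _) ≫ cX'.ι.app (Order.succ a)
          naturality := fun a b f => by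
            simp only [Functor.const_obj_map, Category.comp_id]
            show Y.map (d.m a b (leOfHom f) (hfull b)) ≫
              (d.ψ b (hfull _) ≫ cX'.ι.app (Order.succ b)) = _
            erw [← Category.assoc, key a b (leOfHom f), Category.assoc]
            have hw : X.map (d.m (Order.succ a) (Order.succ b)
                  (Order.succ_le_succ (leOfHom f)) (hfull _)) ≫
                cX'.ι.app (Order.succ b) = cX'.ι.app (Order.succ a) :=
              cX'.w (homOfLE (Order.succ_le_succ (leOfHom f)))
            rw [hw]
            simp
            rfl } }
  have hfac1 : ∀ a, cX'.ι.app a ≫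
      hX'.desc ((Cocone.precompose (Functor.whiskerLeft I' φ)).obj cY') =
      φ.app (d.o a) ≫ cY'.ι.app a := fun a => hX'.fac _ a
  have hfac2 : ∀ a, cY'.ι.app a ≫ hY'.desc cc =
      d.ψ a (hfull _) ≫ cX'.ι.app (Order.succ a) := fun a => hY'.fac cc a
  refine ⟨⟨hY'.desc cc, ?_, ?_⟩⟩
  · refine hX'.hom_ext (fun a => ?_)
    show cX'.ι.app a ≫ (hX'.desc ((Cocone.precompose (Functor.whiskerLeft I' φ)).obj cY') ≫
      hY'.desc cc) = cX'.ι.app a ≫ 𝟙 cX'.pt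
    erw [← Category.assoc, hfac1 a, Category.assoc, hfac2 a,
      ← Category.assoc, d.hψ₁ a (hfull _)]
    have hw : X.map (d.m a (Order.succ a) (Order.le_succ a) (hfull _)) ≫
        cX'.ι.app (Order.succ a) = cX'.ι.app a := cX'.w (homOfLE (Order.le_succ a))
    erw [hw]
    simp
  · refine hY'.hom_ext (fun a => ?_)
    show cY'.ι.app a ≫ (hY'.desc cc ≫
      hX'.desc ((Cocone.precompose (Functor.whiskerLeft I' φ)).obj cY')) = cY'.ι.app a ≫ 𝟙 cY'.pt
    erw [← Category.assoc, hfac2 a, Category.assoc, hfac1 _,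
      ← Category.assoc, d.hψ₂ a (hfull _)]
    have hw : Y.map (d.m a (Order.succ a) (Order.le_succ a) (hfull _)) ≫
        cY'.ι.app (Order.succ a) = cY'.ι.app a := cY'.w (homOfLE (Order.le_succ a))
    erw [hw]
    simp
end
end

section
/- If J is a κ-small κ-filtered category, then there exists an object j of J together with an idempotent endomorphism e : j → j such that the subcategory of J generated by e is cofinal in J. Consequently, in an idempotent-complete category every κ-small κ-filtered diagram has a colimit, and every object is (κ,κ)-presentable. -/
universe v u u₂

open CategoryTheory Limits Opposite

noncomputable section

/-- The one-object subcategory of `J` generated by a submonoid `S` of endomorphisms of `j`,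
together with its inclusion into `J`. -/
def idemFunctor {J : Type v} [SmallCategory J] {j : J} (S : Submonoid (CategoryTheory.End j)) :
    CategoryTheory.SingleObj S ⥤ J where
  obj _ := j
  map f := Subtype.val (α := CategoryTheory.End j) f
  map_id _ := rfl
  map_comp _ _ := rfl

namespace Stmt13Aux

open CategoryTheory Limits Opposite

section Split

variable {C : Type u} [Category.{v} C] {M : Type v} [Monoid M]
  (G : CategoryTheory.SingleObj M ⥤ C) (ε : M) (habs : ∀ s : M, ε * s = ε)
  {Y : C} (i : Y ⟶ G.obj (CategoryTheory.SingleObj.star M))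
  (r : G.obj (CategoryTheory.SingleObj.star M) ⟶ Y)
  (hi : i ≫ r = 𝟙 Y)
  (hr : r ≫ i = G.map (show CategoryTheory.SingleObj.star M ⟶ CategoryTheory.SingleObj.star M from ε))

/-- The cocone on `G` determined by a splitting of the absorbing element `ε`. -/
def splitCocone : Cocone G where
  pt := Y
  ι :=
    { app := fun _ => r
      naturality := fun _ _ s => by
        have key : G.map (show CategoryTheory.SingleObj.star M ⟶ CategoryTheory.SingleObj.star M
            from ε) ≫ r = r := by
          rw [← hr, Category.assoc, hi, Category.comp_id]
        have : G.map s ≫ G.map (show CategoryTheory.SingleObj.star M ⟶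
            CategoryTheory.SingleObj.star M from ε) = G.map (show CategoryTheory.SingleObj.star M ⟶
            CategoryTheory.SingleObj.star M from ε) := by
          rw [← G.map_comp, CategoryTheory.SingleObj.comp_as_mul, habs]
        dsimp
        rw [← key, ← Category.assoc, this, Category.comp_id] }

/-- The split cocone is a colimit. -/
def splitIsColimit : IsColimit (splitCocone G ε habs i r hi hr) where
  desc c := i ≫ c.ι.app (CategoryTheory.SingleObj.star M)
  fac c k := by
    cases k
    have key := c.w (show CategoryTheory.SingleObj.star M ⟶ CategoryTheory.SingleObj.star M from ε)
    dsimp [splitCocone]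
    rw [← Category.assoc, hr, key]
    rfl
  uniq c m hm := by
    have h := hm (CategoryTheory.SingleObj.star M)
    dsimp [splitCocone] at h ⊢
    rw [← h]
    have aux : ∀ n : Y ⟶ c.pt, n = i ≫ r ≫ n := fun n => by
      rw [← Category.assoc, hi, Category.id_comp]
    exact aux m

end Split

end Stmt13Aux

namespace Stmt13Aux

open CategoryTheory Limits Opposite

variable {J : Type v} [SmallCategory J]

lemma closure_mem {j : J} {e : j ⟶ j} (he : e ≫ e = e) :
    ∀ s ∈ Submonoid.closure (M := CategoryTheory.End j) {e},
      s = (1 : CategoryTheory.End j) ∨ s = e := by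
  intro s hs
  induction hs using Submonoid.closure_induction with
  | mem x hx => exact Or.inr hx
  | one => exact Or.inl rfl
  | mul x y _ _ hx hy =>
    rcases hx with h | h <;> rcases hy with h' | h' <;> subst h <;> subst h' <;>
      simp [CategoryTheory.End.mul_def, he]

lemma final_idem {j : J} (e : j ⟶ j) (hne : ∀ i : J, Nonempty (i ⟶ j))
    (habs : ∀ (i : J) (f g : i ⟶ j), f ≫ e = g ≫ e) :
    (idemFunctor (Submonoid.closure (M := CategoryTheory.End j) {e})).Final := by
  set S := Submonoid.closure (M := CategoryTheory.End j) {e} with hS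
  have hεS : (e : CategoryTheory.End j) ∈ S := Submonoid.subset_closure rfl
  constructor
  intro i
  let f₀ : i ⟶ j := (hne i).some
  let z : StructuredArrow i (idemFunctor S) :=
    StructuredArrow.mk (Y := CategoryTheory.SingleObj.star S) (f₀ ≫ e)
  have hz : ∀ x : StructuredArrow i (idemFunctor S), Nonempty (x ⟶ z) := by
    intro x
    exact ⟨StructuredArrow.homMk
      (show x.right ⟶ CategoryTheory.SingleObj.star S from (⟨e, hεS⟩ : S))
      (habs i x.hom f₀)⟩
  have : Nonempty (StructuredArrow i (idemFunctor S)) := ⟨z⟩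
  exact zigzag_isConnected fun x y =>
    (Relation.ReflTransGen.single (show Zag x z from Or.inl (hz x))).trans
      (Relation.ReflTransGen.single (show Zag z y from Or.inr (hz y)))

lemma exists_idem (κ : Cardinal.{v}) (h1 : CardSmallCat J κ) (h2 : IsCardFiltered J κ) :
    ∃ (j : J) (e : j ⟶ j), e ≫ e = e ∧ (∀ i : J, Nonempty (i ⟶ j)) ∧
      ∀ (i : J) (f g : i ⟶ j), f ≫ e = g ≫ e := by
  obtain ⟨c⟩ := h2 J h1 (𝟭 J)
  have habs : ∀ (i : J) (u : i ⟶ c.pt), u ≫ c.ι.app c.pt = c.ι.app i := by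
    intro i u
    simpa using c.w u
  exact ⟨c.pt, c.ι.app c.pt, habs _ _, fun i => ⟨c.ι.app i⟩,
    fun i f g => (habs i f).trans (habs i g).symm⟩

end Stmt13Aux

namespace Stmt13Aux

open CategoryTheory Limits Opposite

lemma absolute {C : Type u} [Category.{v} C] {D : Type u₂} [Category.{v} D]
    (hC : IsIdempotentComplete C)
    {J : Type v} [SmallCategory J] {j : J} {e : j ⟶ j} (he : e ≫ e = e)
    (hfin : (idemFunctor (Submonoid.closure (M := CategoryTheory.End j) {e})).Final)
    (G : J ⥤ C) :
    HasColimit G ∧ ∀ (c : Cocone G), IsColimit c → ∀ (H : C ⥤ D),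
      Nonempty (IsColimit (H.mapCocone c)) := by
  set S := Submonoid.closure (M := CategoryTheory.End j) {e} with hS
  haveI := hfin
  set εS : S := ⟨e, Submonoid.subset_closure rfl⟩ with hεS
  have habsS : ∀ s : S, εS * s = εS := by
    intro s
    rcases closure_mem he s.1 s.2 with h | h <;>
      · apply Subtype.ext
        show εS.1 * s.1 = εS.1
        rw [h]
        simp [hεS, CategoryTheory.End.mul_def, he]
        try rfl
  let G' := idemFunctor S ⋙ G
  obtain ⟨Y, i, r, hi, hr⟩ := hC.idempotents_split (G.obj j) (G.map e)
    (by rw [← G.map_comp, he])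
  have hr' : r ≫ i = G'.map (show CategoryTheory.SingleObj.star S ⟶
      CategoryTheory.SingleObj.star S from εS) := hr
  let c₀ := splitCocone G' εS habsS i r hi hr'
  have hc₀ := splitIsColimit G' εS habsS i r hi hr'
  constructor
  · haveI : HasColimit G' := HasColimit.mk ⟨c₀, hc₀⟩
    exact Functor.Final.hasColimit_of_comp (idemFunctor S)
  · intro c hc H
    have ht : IsColimit (c.whisker (idemFunctor S)) :=
      (Functor.Final.isColimitWhiskerEquiv (idemFunctor S) c).symm hc
    let φ := ht.uniqueUpToIso hc₀
    have hi'' : H.map i ≫ H.map r = 𝟙 _ := by rw [← H.map_comp, hi, H.map_id]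
    have hr'' : H.map r ≫ H.map i = (G' ⋙ H).map (show CategoryTheory.SingleObj.star S ⟶
        CategoryTheory.SingleObj.star S from εS) := by
      rw [← H.map_comp, hr']
      rfl
    have hc₀H : IsColimit (H.mapCocone c₀) := by
      refine (splitIsColimit (G' ⋙ H) εS habsS (H.map i) (H.map r) hi'' hr'').ofIsoColimit ?_
      exact Cocones.ext (Iso.refl _) (fun k => by cases k; simp [splitCocone, c₀])
    have htH : IsColimit (H.mapCocone (c.whisker (idemFunctor S))) :=
      hc₀H.ofIsoColimit ((Cocones.functoriality G' H).mapIso φ).symm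
    have hwh : IsColimit ((H.mapCocone c).whisker (idemFunctor S)) := htH
    exact ⟨(Functor.Final.isColimitWhiskerEquiv (idemFunctor S) (H.mapCocone c)) hwh⟩

end Stmt13Aux

/-- Every `κ`-small `κ`-filtered category has a cofinal subcategory generated by a single
idempotent; consequently, in an idempotent-complete category every `κ`-small `κ`-filtered
diagram has a colimit and every object is `(κ,κ)`-presentable. -/
theorem stmt13 (κ : Cardinal.{v}) (hκ : κ.IsRegular) :
    (∀ (J : Type v) [SmallCategory J], CardSmallCat J κ → IsCardFiltered J κ →
      ∃ (j : J) (e : j ⟶ j), e ≫ e = e ∧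
        (idemFunctor (Submonoid.closure {(e : CategoryTheory.End j)})).Final) ∧
    ∀ (C : Type u) [Category.{v} C], IsIdempotentComplete C →
      (∀ (J : Type v) [SmallCategory J], CardSmallCat J κ → IsCardFiltered J κ →
        ∀ F : J ⥤ C, HasColimit F) ∧
      ∀ X : C, IsRelPresentable κ κ X := by
  have part1 : ∀ (J : Type v) [SmallCategory J], CardSmallCat J κ → IsCardFiltered J κ →
      ∃ (j : J) (e : j ⟶ j), e ≫ e = e ∧ (∀ i : J, Nonempty (i ⟶ j)) ∧
        (∀ (i : J) (f g : i ⟶ j), f ≫ e = g ≫ e) := by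
    intro J _ h1 h2
    exact Stmt13Aux.exists_idem κ h1 h2
  refine ⟨fun J _ h1 h2 => ?_, fun C _ hC => ?_⟩
  · obtain ⟨j, e, he, hne, habs⟩ := part1 J h1 h2
    exact ⟨j, e, he, Stmt13Aux.final_idem e hne habs⟩
  · have key : ∀ (J : Type v) [SmallCategory J], CardSmallCat J κ → IsCardFiltered J κ →
        ∀ G : J ⥤ C, HasColimit G ∧ ∀ (c : Cocone G), IsColimit c → ∀ (H : C ⥤ Type v),
          Nonempty (IsColimit (H.mapCocone c)) := by
      intro J _ h1 h2 G
      obtain ⟨j, e, he, hne, habs⟩ := part1 J h1 h2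
      exact Stmt13Aux.absolute hC he (Stmt13Aux.final_idem e hne habs) G
    refine ⟨fun J _ h1 h2 F => (key J h1 h2 F).1, ?_⟩
    intro X J _ h1 h2
    exact ⟨⟨fun {G} => ⟨fun {c} hc => (key J h1 h2 G).2 c hc (coyoneda.obj (op X))⟩⟩⟩
end
end
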